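/- arXiv:1803.02235 — 6 statements merged into one kernel-verified Lean document; each statement's English description precedes it below -/
import Mathlib

section
/- Let 0 < λ ≤ 1 and suppose W ⊆ V is a nonempty subset equipped with nonnegative weights (a_w)_{w∈W} such that W integrates φ_i exactly for every index i with |μ_i| ≥ λ. Then for every natural number k, the number of vertices within graph distance k of W satisfies #{x ∈ V : d(x,W) ≤ k} ≥ (1/2) · min(λ^{-2k}, n). -/
open Finset

open Matrix

lemma aux_ortho_sumsq {V : Type*} [Fintype V] {n : ℕ} (φ : Fin n → V → ℝ)
    (horth : ∀ i j : Fin n, ∑ v : V, φ i v * φ j v = if i = j then 1 else 0)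
    (d : Fin n → ℝ) :
    ∑ v : V, (∑ i : Fin n, d i * φ i v) ^ 2 = ∑ i : Fin n, d i ^ 2 := by
  calc ∑ v : V, (∑ i : Fin n, d i * φ i v) ^ 2
      = ∑ v : V, ∑ i : Fin n, ∑ j : Fin n, (d i * d j) * (φ i v * φ j v) := by
        refine Finset.sum_congr rfl fun v _ => ?_
        rw [sq, Finset.sum_mul_sum]
        exact Finset.sum_congr rfl fun i _ => Finset.sum_congr rfl fun j _ => by ring
    _ = ∑ i : Fin n, ∑ j : Fin n, ∑ v : V, (d i * d j) * (φ i v * φ j v) := by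
        rw [Finset.sum_comm]
        exact Finset.sum_congr rfl fun i _ => Finset.sum_comm
    _ = ∑ i : Fin n, ∑ j : Fin n, (d i * d j) * (if i = j then 1 else 0) := by
        refine Finset.sum_congr rfl fun i _ => Finset.sum_congr rfl fun j _ => ?_
        rw [← Finset.mul_sum, horth]
    _ = ∑ i : Fin n, d i ^ 2 := by
        simp [mul_ite, sq]

lemma aux_ortho_complete {V : Type*} [Fintype V] [DecidableEq V] {n : ℕ}
    (hn : Fintype.card V = n) (φ : Fin n → V → ℝ)
    (horth : ∀ i j : Fin n, ∑ v : V, φ i v * φ j v = if i = j then 1 else 0)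
    (u v : V) : ∑ i : Fin n, φ i u * φ i v = if u = v then 1 else 0 := by
  classical
  let P : Matrix (Fin n) V ℝ := Matrix.of fun i w => φ i w
  have h1 : P * Pᵀ = 1 := by
    ext i j
    simp only [Matrix.mul_apply, Matrix.transpose_apply, Matrix.one_apply, P, Matrix.of_apply]
    exact horth i j
  have e : Fin n ≃ V := (Fintype.equivFinOfCardEq hn).symm
  have h2 : Pᵀ * P = 1 := (Matrix.mul_eq_one_comm_of_equiv e).mp h1
  have h3 := congrFun (congrFun h2 u) v
  simpa only [Matrix.mul_apply, Matrix.transpose_apply, Matrix.one_apply, P,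
    Matrix.of_apply] using h3

lemma aux_pow_support {V : Type*} [Fintype V] [DecidableEq V]
    (G : SimpleGraph V) [DecidableRel G.Adj] (hconn : G.Connected)
    (M : Matrix V V ℝ)
    (hM : ∀ u v : V, M u v = if G.Adj u v then ((G.degree v : ℝ))⁻¹ else 0) :
    ∀ k : ℕ, ∀ x y : V, (M ^ k) x y ≠ 0 → G.dist x y ≤ k := by
  intro k
  induction k with
  | zero =>
    intro x y h
    rw [pow_zero, Matrix.one_apply] at h
    have hxy : x = y := by by_contra hne; exact h (if_neg hne)
    simp [hxy]
  | succ k ih =>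
    intro x y h
    rw [pow_succ', Matrix.mul_apply] at h
    obtain ⟨z, _, hz⟩ := Finset.exists_ne_zero_of_sum_ne_zero h
    have hadj : G.Adj x z := by
      by_contra hna
      rw [hM, if_neg hna, zero_mul] at hz
      exact hz rfl
    have h1 : (M ^ k) z y ≠ 0 := fun h0 => hz (by rw [h0, mul_zero])
    have h2 : G.dist z y ≤ k := ih z y h1
    have h3 : G.dist x z = 1 := SimpleGraph.dist_eq_one_iff_adj.mpr hadj
    calc G.dist x y ≤ G.dist x z + G.dist z y := hconn.dist_triangle
      _ ≤ 1 + k := by omega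
      _ = k + 1 := by omega

lemma aux_pow_colsum {V : Type*} [Fintype V] [DecidableEq V]
    (G : SimpleGraph V) [DecidableRel G.Adj]
    (hdeg : ∀ v : V, 0 < G.degree v)
    (M : Matrix V V ℝ)
    (hM : ∀ u v : V, M u v = if G.Adj u v then ((G.degree v : ℝ))⁻¹ else 0) :
    ∀ k : ℕ, ∀ v : V, ∑ x : V, (M ^ k) x v = 1 := by
  have base : ∀ v : V, ∑ x : V, M x v = 1 := by
    intro v
    calc ∑ x : V, M x v = ∑ x : V, (if G.Adj v x then ((G.degree v : ℝ))⁻¹ else 0) := by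
          refine Finset.sum_congr rfl fun x _ => ?_
          rw [hM]
          by_cases hxy : G.Adj x v
          · rw [if_pos hxy, if_pos (G.adj_symm hxy)]
          · rw [if_neg hxy, if_neg fun h' => hxy (G.adj_symm h')]
      _ = ∑ x ∈ Finset.univ.filter (G.Adj v), ((G.degree v : ℝ))⁻¹ := by
          rw [Finset.sum_filter]
      _ = (G.degree v : ℝ) * ((G.degree v : ℝ))⁻¹ := by
          rw [Finset.sum_const, ← SimpleGraph.neighborFinset_eq_filter,
            SimpleGraph.card_neighborFinset_eq_degree, nsmul_eq_mul]
      _ = 1 := mul_inv_cancel₀ (by exact_mod_cast (hdeg v).ne')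
  intro k
  induction k with
  | zero => intro v; simp [Matrix.one_apply, Finset.sum_ite_eq]
  | succ k ih =>
    intro v
    calc ∑ x : V, (M ^ (k + 1)) x v = ∑ x : V, ∑ z : V, M x z * (M ^ k) z v := by
          refine Finset.sum_congr rfl fun x _ => ?_
          rw [pow_succ', Matrix.mul_apply]
      _ = ∑ z : V, (∑ x : V, M x z) * (M ^ k) z v := by
          rw [Finset.sum_comm]
          exact Finset.sum_congr rfl fun z _ => (Finset.sum_mul _ _ _).symm
      _ = ∑ z : V, (M ^ k) z v := by
          refine Finset.sum_congr rfl fun z _ => ?_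
          rw [base z, one_mul]
      _ = 1 := ih v

/-- Let `G` be a finite simple connected graph on `n ≥ 1` vertices in which
every vertex has positive degree, `M = A D⁻¹` its random-walk matrix, with an orthonormal
eigenbasis `φ_0, …, φ_{n-1}`, `M φ_i = μ_i • φ_i`, where `φ_0` is the constant vector
`n^{-1/2}·(1,…,1)` with eigenvalue `μ_0 = 1`.  If `0 < λ ≤ 1` and the nonempty set `W` with
nonnegative weights `a_w` integrates `φ_i` exactly whenever `|μ_i| ≥ λ`, then for every `k`,
`#{x : d(x,W) ≤ k} ≥ (1/2) · min(λ^{-2k}, n)`. -/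
theorem graphical_design_neighborhood_growth
    {V : Type*} [Fintype V] [DecidableEq V]
    (G : SimpleGraph V) [DecidableRel G.Adj]
    (hconn : G.Connected)
    (n : ℕ) (hn : Fintype.card V = n) (hn1 : 0 < n)
    (hdeg : ∀ v : V, 0 < G.degree v)
    (M : Matrix V V ℝ)
    (hM : ∀ u v : V, M u v = if G.Adj u v then ((G.degree v : ℝ))⁻¹ else 0)
    (φ : Fin n → V → ℝ) (μ : Fin n → ℝ)
    (horth : ∀ i j : Fin n, ∑ v : V, φ i v * φ j v = if i = j then 1 else 0)
    (heig : ∀ i : Fin n, M.mulVec (φ i) = μ i • φ i)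
    (hφ0 : ∀ v : V, φ ⟨0, hn1⟩ v = (Real.sqrt n)⁻¹)
    (hμ0 : μ ⟨0, hn1⟩ = 1)
    (lam : ℝ) (hlam : 0 < lam) (hlam1 : lam ≤ 1)
    (W : Finset V) (hW : W.Nonempty)
    (a : V → ℝ) (ha : ∀ w ∈ W, 0 ≤ a w)
    (hint : ∀ i : Fin n, lam ≤ |μ i| →
      ∑ w ∈ W, a w * φ i w = (1 / (n : ℝ)) * ∑ v : V, φ i v) :
    ∀ k : ℕ,
      (({x : V | ∃ w ∈ W, G.dist x w ≤ k}.ncard : ℝ)) ≥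
        (1 / 2) * min ((lam ^ (2 * k))⁻¹) (n : ℝ) := by
  classical
  intro k
  set L : ℝ := lam ^ (2 * k) with hLdef
  have hL0 : 0 < L := pow_pos hlam _
  have hL1 : L ≤ 1 := pow_le_one₀ hlam.le hlam1
  have hnR : (0 : ℝ) < n := by exact_mod_cast hn1
  have hnR1 : (1 : ℝ) ≤ n := by exact_mod_cast hn1
  have hsqrt : (0 : ℝ) < Real.sqrt n := Real.sqrt_pos.mpr hnR
  set i0 : Fin n := ⟨0, hn1⟩ with hi0def
  -- the weights sum to 1
  have hsum_a : ∑ w ∈ W, a w = 1 := by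
    have h := hint i0 (by rw [hμ0, abs_one]; exact hlam1)
    simp only [hφ0] at h
    rw [← Finset.sum_mul, Finset.sum_const, Finset.card_univ, hn, nsmul_eq_mul] at h
    have hr : (1 / (n : ℝ)) * ((n : ℝ) * (Real.sqrt n)⁻¹) = 1 * (Real.sqrt n)⁻¹ := by
      field_simp
    rw [hr] at h
    exact mul_right_cancel₀ (inv_ne_zero hsqrt.ne') h
  -- weighted indicator vector and its Fourier coefficients
  set b : V → ℝ := fun v => if v ∈ W then a v else 0 with hbdef
  set c : Fin n → ℝ := fun i => ∑ v : V, b v * φ i v with hcdef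
  have hbW : ∀ f : V → ℝ, ∑ v : V, b v * f v = ∑ w ∈ W, a w * f w := by
    intro f
    calc ∑ v : V, b v * f v = ∑ v : V, (if v ∈ W then a v * f v else 0) := by
          refine Finset.sum_congr rfl fun v _ => ?_
          by_cases h : v ∈ W <;> simp [hbdef, h]
      _ = ∑ w ∈ W, a w * f w := by rw [Finset.sum_ite_mem, Finset.univ_inter]
  have hc0 : c i0 = (Real.sqrt n)⁻¹ := by
    rw [hcdef]
    simp only [hbW]
    simp only [hφ0]
    rw [← Finset.sum_mul, hsum_a, one_mul]
  have hcz : ∀ i : Fin n, i ≠ i0 → lam ≤ |μ i| → c i = 0 := by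
    intro i hi hli
    have hsum0 : ∑ v : V, φ i v = 0 := by
      have h := horth i i0
      rw [if_neg hi] at h
      simp only [hφ0] at h
      rw [← Finset.sum_mul] at h
      rcases mul_eq_zero.mp h with h' | h'
      · exact h'
      · exact absurd h' (inv_ne_zero hsqrt.ne')
    rw [hcdef]
    simp only [hbW]
    rw [hint i hli, hsum0, mul_zero]
  -- expansion of b in the eigenbasis
  have hbexp : ∀ v : V, b v = ∑ i : Fin n, c i * φ i v := by
    intro v
    calc b v = ∑ u : V, b u * (if u = v then 1 else 0) := by
          simp [Finset.sum_ite_eq]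
      _ = ∑ u : V, b u * ∑ i : Fin n, φ i u * φ i v := by
          exact Finset.sum_congr rfl fun u _ => by
            rw [aux_ortho_complete hn φ horth u v]
      _ = ∑ i : Fin n, c i * φ i v := by
          simp only [Finset.mul_sum]
          rw [Finset.sum_comm]
          refine Finset.sum_congr rfl fun i _ => ?_
          rw [hcdef, Finset.sum_mul]
          exact Finset.sum_congr rfl fun u _ => by ring
  -- eigenvector powers
  have hpow : ∀ i : Fin n, ∀ m : ℕ, (M ^ m).mulVec (φ i) = (μ i ^ m) • φ i := by
    intro i m
    induction m with
    | zero => simp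
    | succ m ih =>
      rw [pow_succ', ← Matrix.mulVec_mulVec, ih, Matrix.mulVec_smul, heig i,
        smul_smul, ← pow_succ]
  set g : V → ℝ := (M ^ k).mulVec b with hgdef
  have hgapp : ∀ x : V, g x = ∑ v : V, (M ^ k) x v * b v := by
    intro x; rfl
  have hgexp : ∀ x : V, g x = ∑ i : Fin n, (c i * μ i ^ k) * φ i x := by
    intro x
    calc g x = ∑ v : V, (M ^ k) x v * b v := hgapp x
      _ = ∑ v : V, (M ^ k) x v * ∑ i : Fin n, c i * φ i v := by
          exact Finset.sum_congr rfl fun v _ => by rw [← hbexp v]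
      _ = ∑ i : Fin n, (c i * μ i ^ k) * φ i x := by
          simp only [Finset.mul_sum]
          rw [Finset.sum_comm]
          refine Finset.sum_congr rfl fun i _ => ?_
          have hkey : ∑ v : V, (M ^ k) x v * φ i v = μ i ^ k * φ i x := by
            have := congrFun (hpow i k) x
            simpa [Matrix.mulVec, dotProduct] using this
          calc ∑ v : V, (M ^ k) x v * (c i * φ i v)
              = c i * ∑ v : V, (M ^ k) x v * φ i v := by
                rw [Finset.mul_sum]
                exact Finset.sum_congr rfl fun v _ => by ring
            _ = (c i * μ i ^ k) * φ i x := by rw [hkey]; ring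
  -- total mass of g is 1
  have hgsum : ∑ x : V, g x = 1 := by
    calc ∑ x : V, g x = ∑ x : V, ∑ v : V, (M ^ k) x v * b v :=
          Finset.sum_congr rfl fun x _ => hgapp x
      _ = ∑ v : V, (∑ x : V, (M ^ k) x v) * b v := by
          rw [Finset.sum_comm]
          exact Finset.sum_congr rfl fun v _ => (Finset.sum_mul _ _ _).symm
      _ = ∑ v : V, b v := by
          refine Finset.sum_congr rfl fun v _ => ?_
          rw [aux_pow_colsum G hdeg M hM k v, one_mul]
      _ = 1 := by
          have := hbW (fun _ => 1)
          simpa [hsum_a] using this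
  -- ℓ² bound
  have hcsq : ∑ i : Fin n, (c i) ^ 2 ≤ 1 := by
    have h2 : ∑ i : Fin n, (c i) ^ 2 = ∑ v : V, (b v) ^ 2 := by
      rw [← aux_ortho_sumsq φ horth c]
      exact (Finset.sum_congr rfl fun v _ => by rw [← hbexp v]).symm
    rw [h2]
    have h3 : ∑ v : V, (b v) ^ 2 = ∑ w ∈ W, a w * a w := by
      have := hbW (fun v => b v)
      calc ∑ v : V, (b v) ^ 2 = ∑ v : V, b v * b v := by
            exact Finset.sum_congr rfl fun v _ => sq (b v) ▸ by ring
        _ = ∑ w ∈ W, a w * b w := this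
        _ = ∑ w ∈ W, a w * a w := by
            refine Finset.sum_congr rfl fun w hw => ?_
            rw [hbdef]; simp [hw]
    rw [h3]
    calc ∑ w ∈ W, a w * a w ≤ ∑ w ∈ W, a w * 1 := by
          refine Finset.sum_le_sum fun w hw => ?_
          have haw : a w ≤ 1 := by
            rw [← hsum_a]
            exact Finset.single_le_sum (fun u hu => ha u hu) hw
          exact mul_le_mul_of_nonneg_left haw (ha w hw)
      _ = 1 := by rw [← Finset.sum_mul, hsum_a, one_mul]
  have hgsq : ∑ x : V, (g x) ^ 2 ≤ 1 / (n : ℝ) + L := by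
    have h1 : ∑ x : V, (g x) ^ 2 = ∑ i : Fin n, (c i * μ i ^ k) ^ 2 := by
      rw [← aux_ortho_sumsq φ horth (fun i => c i * μ i ^ k)]
      exact Finset.sum_congr rfl fun x _ => by rw [hgexp x]
    rw [h1]
    have hterm : ∀ i : Fin n, i ≠ i0 → (c i * μ i ^ k) ^ 2 ≤ L * (c i) ^ 2 := by
      intro i hi
      by_cases hli : lam ≤ |μ i|
      · rw [hcz i hi hli]; simp
      · push_neg at hli
        have hmu : (μ i ^ k) ^ 2 ≤ L := by
          have e1 : (μ i ^ k) ^ 2 = (|μ i| ^ 2) ^ k := by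
            rw [sq_abs]; ring
          have e2 : L = (lam ^ 2) ^ k := by rw [hLdef, ← pow_mul]
          rw [e1, e2]
          exact pow_le_pow_left₀ (sq_nonneg _)
            (pow_le_pow_left₀ (abs_nonneg _) hli.le 2) k
        nlinarith [sq_nonneg (c i), sq_nonneg (μ i ^ k)]
    have h0term : (c i0 * μ i0 ^ k) ^ 2 = 1 / (n : ℝ) := by
      rw [hc0, hμ0, one_pow, mul_one]
      rw [← Real.sqrt_inv]
      rw [Real.sq_sqrt (by positivity)]
      rw [one_div]
    calc ∑ i : Fin n, (c i * μ i ^ k) ^ 2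
        = (c i0 * μ i0 ^ k) ^ 2 + ∑ i ∈ Finset.univ.erase i0, (c i * μ i ^ k) ^ 2 :=
          (Finset.add_sum_erase _ _ (Finset.mem_univ i0)).symm
      _ ≤ 1 / (n : ℝ) + L * ∑ i ∈ Finset.univ.erase i0, (c i) ^ 2 := by
          rw [h0term, Finset.mul_sum]
          exact add_le_add_right (Finset.sum_le_sum fun i hi =>
            hterm i (Finset.ne_of_mem_erase hi)) _
      _ ≤ 1 / (n : ℝ) + L := by
          have hle : ∑ i ∈ Finset.univ.erase i0, (c i) ^ 2 ≤ 1 := by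
            refine le_trans ?_ hcsq
            exact Finset.sum_le_sum_of_subset_of_nonneg
              (Finset.erase_subset _ _) (fun i _ _ => sq_nonneg _)
          nlinarith
  -- the neighborhood as a finset
  set B : Finset V := Finset.univ.filter (fun x => ∃ w ∈ W, G.dist x w ≤ k) with hBdef
  have hsupp : ∀ x : V, x ∉ B → g x = 0 := by
    intro x hx
    simp only [hBdef, Finset.mem_filter, Finset.mem_univ, true_and, not_exists] at hx
    push_neg at hx
    rw [hgapp x]
    refine Finset.sum_eq_zero fun v _ => ?_
    by_cases hv : v ∈ W
    · have hMk : (M ^ k) x v = 0 := by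
        by_contra h
        exact absurd (aux_pow_support G hconn M hM k x v h) (not_le.mpr (hx v hv))
      rw [hMk, zero_mul]
    · rw [hbdef]; simp [hv]
  have hBsum : ∑ x ∈ B, g x = 1 := by
    rw [← hgsum]
    exact Finset.sum_subset (Finset.subset_univ B) (fun x _ hx => hsupp x hx)
  -- Cauchy–Schwarz
  have hCS : 1 ≤ (B.card : ℝ) * (1 / (n : ℝ) + L) := by
    have h := Finset.sum_mul_sq_le_sq_mul_sq B (fun _ => (1 : ℝ)) g
    simp only [one_pow, one_mul, Finset.sum_const, nsmul_eq_mul, mul_one] at h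
    rw [hBsum, one_pow] at h
    have hBg : ∑ x ∈ B, (g x) ^ 2 ≤ ∑ x : V, (g x) ^ 2 :=
      Finset.sum_le_sum_of_subset_of_nonneg (Finset.subset_univ B)
        (fun x _ _ => sq_nonneg _)
    calc (1 : ℝ) ≤ (B.card : ℝ) * ∑ x ∈ B, (g x) ^ 2 := h
      _ ≤ (B.card : ℝ) * (1 / (n : ℝ) + L) := by
          refine mul_le_mul_of_nonneg_left (le_trans hBg hgsq) (by positivity)
  -- identify ncard with B.card
  have hset : {x : V | ∃ w ∈ W, G.dist x w ≤ k} = ↑B := by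
    ext x; simp [hBdef]
  rw [hset, Set.ncard_coe_finset]
  -- final arithmetic
  have hq : (0 : ℝ) < 1 / (n : ℝ) + L := by positivity
  have hmin : min L⁻¹ (n : ℝ) * (1 / (n : ℝ) + L) ≤ 2 := by
    rcases le_total L⁻¹ (n : ℝ) with h | h
    · rw [min_eq_left h]
      have h1 : (1 : ℝ) ≤ L * n := by
        have := mul_le_mul_of_nonneg_left h hL0.le
        rwa [mul_inv_cancel₀ hL0.ne'] at this
      have h2 : L⁻¹ * (1 / (n : ℝ) + L) = 1 / (L * n) + 1 := by
        field_simp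
      rw [h2]
      have : 1 / (L * n) ≤ 1 := by
        rw [div_le_one (by positivity)]; exact h1
      linarith
    · rw [min_eq_right h]
      have h1 : (n : ℝ) * L ≤ 1 := by
        have := mul_le_mul_of_nonneg_left h hL0.le
        rwa [mul_inv_cancel₀ hL0.ne', mul_comm] at this
      have h2 : (n : ℝ) * (1 / (n : ℝ) + L) = 1 + n * L := by
        field_simp
      rw [h2]; linarith
  rw [ge_iff_le, hLdef]
  nlinarith [hCS, hmin, hq, Finset.card_pos.mpr (show B.Nonempty from ⟨hW.choose, by
    simp only [hBdef, Finset.mem_filter, Finset.mem_univ, true_and]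
    exact ⟨hW.choose, hW.choose_spec, by simp [SimpleGraph.dist_self]⟩⟩)]
end

section
/- Let 0 < λ ≤ 1 and suppose W ⊆ V is a nonempty subset equipped with the equal weights a_w = 1/|W| for all w ∈ W, such that W integrates φ_i exactly for every index i with |μ_i| ≥ λ. Then for every natural number k, #{x ∈ V : d(x,W) ≤ k} ≥ (1/2) · min(|W| · λ^{-2k}, n). -/
open Finset

/-- Same setting as Statement 0, but with the equal weights `a_w = 1/|W|`:
if `W` integrates `φ_i` exactly for every `i` with `|μ_i| ≥ λ`, then for every `k`,
`#{x : d(x,W) ≤ k} ≥ (1/2) · min(|W|·λ^{-2k}, n)`. -/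
theorem graphical_design_neighborhood_growth_equal_weights
    {V : Type*} [Fintype V] [DecidableEq V]
    (G : SimpleGraph V) [DecidableRel G.Adj]
    (hconn : G.Connected)
    (n : ℕ) (hn : Fintype.card V = n) (hn1 : 0 < n)
    (hdeg : ∀ v : V, 0 < G.degree v)
    (M : Matrix V V ℝ)
    (hM : ∀ u v : V, M u v = if G.Adj u v then ((G.degree v : ℝ))⁻¹ else 0)
    (φ : Fin n → V → ℝ) (μ : Fin n → ℝ)
    (horth : ∀ i j : Fin n, ∑ v : V, φ i v * φ j v = if i = j then 1 else 0)
    (heig : ∀ i : Fin n, M.mulVec (φ i) = μ i • φ i)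
    (hφ0 : ∀ v : V, φ ⟨0, hn1⟩ v = (Real.sqrt n)⁻¹)
    (hμ0 : μ ⟨0, hn1⟩ = 1)
    (lam : ℝ) (hlam : 0 < lam) (hlam1 : lam ≤ 1)
    (W : Finset V) (hW : W.Nonempty)
    (hint : ∀ i : Fin n, lam ≤ |μ i| →
      ∑ w ∈ W, ((W.card : ℝ))⁻¹ * φ i w = (1 / (n : ℝ)) * ∑ v : V, φ i v) :
    ∀ k : ℕ,
      (({x : V | ∃ w ∈ W, G.dist x w ≤ k}.ncard : ℝ)) ≥
        (1 / 2) * min ((W.card : ℝ) * (lam ^ (2 * k))⁻¹) (n : ℝ) := by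
  classical
  intro k
  set m : ℕ := W.card with hm
  have hm0 : 0 < m := Finset.card_pos.mpr hW
  have hmR : (0:ℝ) < m := by exact_mod_cast hm0
  have hnR : (0:ℝ) < n := by exact_mod_cast hn1
  set t : ℝ := lam ^ (2 * k) with ht
  have ht0 : 0 < t := pow_pos hlam _
  set f : V → ℝ := fun v => if v ∈ W then (m:ℝ)⁻¹ else 0 with hfdef
  set c : Fin n → ℝ := fun i => ∑ v, φ i v * f v with hcdef
  -- dual orthogonality
  have hdual : ∀ u v : V, ∑ i : Fin n, φ i u * φ i v = if u = v then 1 else 0 := by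
    have e : Fin n ≃ V := (Fintype.equivFinOfCardEq hn).symm
    set Φ : Matrix (Fin n) V ℝ := Matrix.of (fun i v => φ i v) with hΦ
    have h1 : Φ * Φ.transpose = 1 := by
      ext i j
      simpa [Φ, Matrix.mul_apply, Matrix.one_apply] using horth i j
    have h2 : Φ.transpose * Φ = 1 := (Matrix.mul_eq_one_comm_of_equiv e).mp h1
    intro u v
    have := congrFun (congrFun h2 u) v
    simpa [Φ, Matrix.mul_apply, Matrix.one_apply] using this
  -- expansion of f
  have hexp : ∀ u, f u = ∑ i, c i * φ i u := by
    intro u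
    have h : ∑ v, (∑ i : Fin n, φ i u * φ i v) * f v = ∑ i, c i * φ i u := by
      simp_rw [Finset.sum_mul]
      rw [Finset.sum_comm]
      refine Finset.sum_congr rfl fun i _ => ?_
      simp only [hcdef]
      rw [Finset.sum_mul]
      exact Finset.sum_congr rfl fun v _ => by ring
    rw [← h]
    simp [hdual, ite_mul]
  -- eigen action of powers
  have heigk : ∀ (j : ℕ) (i : Fin n), (M ^ j).mulVec (φ i) = (μ i ^ j) • φ i := by
    intro j i
    induction j with
    | zero => simp
    | succ j ih =>
      rw [pow_succ, ← Matrix.mulVec_mulVec, heig, Matrix.mulVec_smul, ih, smul_smul,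
        ← pow_succ']
  -- expansion of (M^k) f
  have hMk : (M ^ k).mulVec f = fun u => ∑ i, (c i * μ i ^ k) * φ i u := by
    have hfv : f = ∑ i, c i • φ i := by
      funext u
      rw [hexp u]
      simp [Finset.sum_apply]
    rw [hfv]
    have h : (M ^ k).mulVec (∑ i, c i • φ i) = ∑ i, c i • ((μ i ^ k) • φ i) := by
      rw [← Matrix.mulVecLin_apply, map_sum]
      refine Finset.sum_congr rfl fun i _ => ?_
      rw [map_smul, Matrix.mulVecLin_apply, heigk k i]
    rw [h]
    funext u
    simp [Finset.sum_apply, smul_smul, mul_assoc]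
  -- Parseval
  have hpars : ∀ a : Fin n → ℝ, ∑ u : V, (∑ i, a i * φ i u)^2 = ∑ i, a i ^ 2 := by
    intro a
    have h1 : ∀ u : V, (∑ i, a i * φ i u)^2
        = ∑ i, ∑ j, a i * a j * (φ i u * φ j u) := by
      intro u
      rw [sq, Finset.sum_mul_sum]
      exact Finset.sum_congr rfl fun i _ => Finset.sum_congr rfl fun j _ => by ring
    calc ∑ u : V, (∑ i, a i * φ i u)^2
        = ∑ i, ∑ j, ∑ u : V, a i * a j * (φ i u * φ j u) := by
          simp_rw [h1]
          rw [Finset.sum_comm]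
          exact Finset.sum_congr rfl fun i _ => Finset.sum_comm
      _ = ∑ i, a i ^ 2 := by
          simp_rw [← Finset.mul_sum, horth, mul_ite, mul_one, mul_zero]
          simp [Finset.sum_ite_eq, sq]
  -- column sums of M are 1
  have hcol : ∀ v : V, ∑ u : V, M u v = 1 := by
    intro v
    have hfilter : Finset.univ.filter (fun u => G.Adj u v) = G.neighborFinset v := by
      ext u
      simp [SimpleGraph.adj_comm]
    simp_rw [hM]
    rw [Finset.sum_ite, Finset.sum_const_zero, add_zero, Finset.sum_const, hfilter,
      SimpleGraph.card_neighborFinset_eq_degree, nsmul_eq_mul]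
    exact mul_inv_cancel₀ (by exact_mod_cast (hdeg v).ne')
  have hstep : ∀ h : V → ℝ, ∑ u, M.mulVec h u = ∑ u, h u := by
    intro h
    simp_rw [Matrix.mulVec, dotProduct]
    rw [Finset.sum_comm]
    simp_rw [← Finset.sum_mul, hcol, one_mul]
  have hsumk : ∀ j : ℕ, ∑ u, (M ^ j).mulVec f u = ∑ u, f u := by
    intro j
    induction j with
    | zero => simp
    | succ j ih =>
      rw [pow_succ', ← Matrix.mulVec_mulVec, hstep, ih]
  have hfsum : ∑ u : V, f u = 1 := by
    rw [hfdef]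
    rw [Finset.sum_ite_mem, Finset.univ_inter, Finset.sum_const, nsmul_eq_mul]
    exact mul_inv_cancel₀ hmR.ne'
  have hfsq : ∑ u : V, f u ^ 2 = (m:ℝ)⁻¹ := by
    have h : ∀ u : V, f u ^ 2 = if u ∈ W then ((m:ℝ)⁻¹)^2 else 0 := by
      intro u
      by_cases hu : u ∈ W <;> simp [hfdef, hu]
    simp_rw [h]
    rw [Finset.sum_ite_mem, Finset.univ_inter, Finset.sum_const, nsmul_eq_mul, sq,
      ← mul_assoc, mul_inv_cancel₀ hmR.ne', one_mul]
  have hcsq : ∑ i, c i ^ 2 = (m:ℝ)⁻¹ := by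
    rw [← hpars c, ← hfsq]
    exact Finset.sum_congr rfl fun u _ => by rw [← hexp u]
  have hsqrtpos : 0 < Real.sqrt n := Real.sqrt_pos.mpr hnR
  have hc0 : c ⟨0, hn1⟩ = (Real.sqrt n)⁻¹ := by
    simp only [hcdef]
    simp_rw [hφ0]
    rw [← Finset.mul_sum, hfsum, mul_one]
  have hczero : ∀ i : Fin n, i ≠ ⟨0, hn1⟩ → lam ≤ |μ i| → c i = 0 := by
    intro i hne hlami
    have hsum0 : ∑ v : V, φ i v = 0 := by
      have h := horth i ⟨0, hn1⟩
      rw [if_neg (by simpa using hne)] at h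
      simp_rw [hφ0] at h
      rw [← Finset.sum_mul] at h
      exact (mul_eq_zero.mp h).resolve_right (inv_ne_zero hsqrtpos.ne')
    have h2 := hint i hlami
    rw [hsum0, mul_zero] at h2
    have h3 : ∑ v : V, φ i v * f v = ∑ w ∈ W, (m:ℝ)⁻¹ * φ i w := by
      simp_rw [hfdef, mul_ite, mul_zero]
      rw [Finset.sum_ite_mem, Finset.univ_inter]
      exact Finset.sum_congr rfl fun w _ => mul_comm _ _
    simp only [hcdef]
    rw [h3, h2]
  -- key spectral bound
  have hbound : ∑ i, (c i * μ i ^ k)^2 ≤ (n:ℝ)⁻¹ + t * (m:ℝ)⁻¹ := by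
    have hterm : ∀ i ∈ Finset.univ.erase (⟨0, hn1⟩ : Fin n),
        (c i * μ i ^ k)^2 ≤ t * c i ^ 2 := by
      intro i hi
      have hne : i ≠ ⟨0, hn1⟩ := Finset.ne_of_mem_erase hi
      by_cases hcase : lam ≤ |μ i|
      · rw [hczero i hne hcase]
        simpa using mul_nonneg ht0.le (sq_nonneg (c i))
      · push_neg at hcase
        have h1 : (μ i ^ k)^2 ≤ t := by
          calc (μ i ^ k)^2 = (|μ i| ^ k)^2 := by rw [← abs_pow, sq_abs]
            _ ≤ (lam ^ k)^2 := by
                have h := pow_le_pow_left₀ (abs_nonneg (μ i)) hcase.le k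
                exact pow_le_pow_left₀ (pow_nonneg (abs_nonneg _) k) h 2
            _ = t := by rw [ht, ← pow_mul, mul_comm]
        calc (c i * μ i ^ k)^2 = c i ^ 2 * (μ i ^ k)^2 := by ring
          _ ≤ c i ^ 2 * t := mul_le_mul_of_nonneg_left h1 (sq_nonneg _)
          _ = t * c i ^ 2 := mul_comm _ _
    have herase : ∑ i ∈ Finset.univ.erase (⟨0, hn1⟩ : Fin n), (c i * μ i ^ k)^2
        ≤ t * (m:ℝ)⁻¹ := by
      calc ∑ i ∈ Finset.univ.erase (⟨0, hn1⟩ : Fin n), (c i * μ i ^ k)^2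
          ≤ ∑ i ∈ Finset.univ.erase (⟨0, hn1⟩ : Fin n), t * c i ^ 2 :=
            Finset.sum_le_sum hterm
        _ ≤ ∑ i, t * c i ^ 2 :=
            Finset.sum_le_sum_of_subset_of_nonneg (Finset.erase_subset _ _)
              (fun i _ _ => mul_nonneg ht0.le (sq_nonneg _))
        _ = t * (m:ℝ)⁻¹ := by rw [← Finset.mul_sum, hcsq]
    have h0 : (c ⟨0, hn1⟩ * μ ⟨0, hn1⟩ ^ k)^2 = (n:ℝ)⁻¹ := by
      rw [hμ0, one_pow, mul_one, hc0, inv_pow, Real.sq_sqrt hnR.le]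
    calc ∑ i, (c i * μ i ^ k)^2
        = (c ⟨0, hn1⟩ * μ ⟨0, hn1⟩ ^ k)^2
          + ∑ i ∈ Finset.univ.erase (⟨0, hn1⟩ : Fin n), (c i * μ i ^ k)^2 :=
          (Finset.add_sum_erase Finset.univ (fun i => (c i * μ i ^ k)^2)
            (Finset.mem_univ (⟨0, hn1⟩ : Fin n))).symm
      _ ≤ (n:ℝ)⁻¹ + t * (m:ℝ)⁻¹ := by rw [h0]; linarith
  -- support of (M^k) f
  have hsupp : ∀ (j : ℕ) (u : V), (M ^ j).mulVec f u ≠ 0 → ∃ w ∈ W, G.dist u w ≤ j := by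
    intro j
    induction j with
    | zero =>
      intro u hu
      rw [pow_zero, Matrix.one_mulVec] at hu
      refine ⟨u, ?_, by simp⟩
      by_contra h
      rw [hfdef] at hu
      simp [h] at hu
    | succ j ih =>
      intro u hu
      rw [pow_succ', ← Matrix.mulVec_mulVec] at hu
      have hex : ∃ v : V, M u v * (M ^ j).mulVec f v ≠ 0 := by
        by_contra h
        push_neg at h
        exact hu (by simpa [Matrix.mulVec, dotProduct]
          using Finset.sum_eq_zero fun v _ => h v)
      obtain ⟨v, hv⟩ := hex
      have hMuv : G.Adj u v := by
        by_contra hadj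
        rw [hM u v, if_neg hadj, zero_mul] at hv
        exact hv rfl
      have hgv : (M ^ j).mulVec f v ≠ 0 := fun h0 => hv (by rw [h0, mul_zero])
      obtain ⟨w, hwW, hwd⟩ := ih v hgv
      refine ⟨w, hwW, ?_⟩
      have hd1 : G.dist u v = 1 := SimpleGraph.dist_eq_one_iff_adj.mpr hMuv
      have htri : G.dist u w ≤ G.dist u v + G.dist v w := hconn.dist_triangle
      omega
  -- the neighborhood finset
  set S : Finset V := Finset.univ.filter (fun x => ∃ w ∈ W, G.dist x w ≤ k) with hS
  set g : V → ℝ := (M ^ k).mulVec f with hgdef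
  have hgsum : ∑ u ∈ S, g u = 1 := by
    rw [Finset.sum_subset (Finset.subset_univ S) (fun x _ hx => ?_)]
    · simp only [hgdef]
      rw [hsumk k, hfsum]
    · by_contra h
      exact hx (Finset.mem_filter.mpr ⟨Finset.mem_univ x, hsupp k x h⟩)
  have hgsq : ∑ u ∈ S, g u ^ 2 ≤ (n:ℝ)⁻¹ + t * (m:ℝ)⁻¹ := by
    calc ∑ u ∈ S, g u ^ 2 ≤ ∑ u : V, g u ^ 2 :=
          Finset.sum_le_sum_of_subset_of_nonneg (Finset.subset_univ S)
            (fun _ _ _ => sq_nonneg _)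
      _ = ∑ i, (c i * μ i ^ k)^2 := by
          simp only [hMk]
          exact hpars (fun i => c i * μ i ^ k)
      _ ≤ _ := hbound
  have hCS : (1:ℝ) ≤ (S.card : ℝ) * ((n:ℝ)⁻¹ + t * (m:ℝ)⁻¹) := by
    have h := Finset.sum_mul_sq_le_sq_mul_sq S (fun _ => (1:ℝ)) g
    simp only [one_mul, one_pow] at h
    rw [hgsum, Finset.sum_const, nsmul_eq_mul, mul_one, one_pow] at h
    calc (1:ℝ) ≤ (S.card : ℝ) * ∑ u ∈ S, g u ^ 2 := h
      _ ≤ _ := mul_le_mul_of_nonneg_left hgsq (Nat.cast_nonneg _)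
  have hset : {x : V | ∃ w ∈ W, G.dist x w ≤ k} = ↑S := by
    ext x
    simp [hS]
  rw [hset, Set.ncard_coe_finset]
  set B : ℝ := (n:ℝ)⁻¹ + t * (m:ℝ)⁻¹ with hB
  have hBpos : 0 < B := add_pos (inv_pos.mpr hnR) (mul_pos ht0 (inv_pos.mpr hmR))
  have h1 : min ((m:ℝ) * t⁻¹) (n:ℝ) ≤ (m:ℝ) * t⁻¹ := min_le_left _ _
  have h2 : min ((m:ℝ) * t⁻¹) (n:ℝ) ≤ (n:ℝ) := min_le_right _ _
  have hmin : min ((m:ℝ) * t⁻¹) (n:ℝ) * B ≤ 2 := by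
    rw [hB, mul_add]
    have e1 : min ((m:ℝ) * t⁻¹) (n:ℝ) * (n:ℝ)⁻¹ ≤ 1 := by
      calc min ((m:ℝ) * t⁻¹) (n:ℝ) * (n:ℝ)⁻¹ ≤ (n:ℝ) * (n:ℝ)⁻¹ :=
            mul_le_mul_of_nonneg_right h2 (by positivity)
        _ = 1 := mul_inv_cancel₀ hnR.ne'
    have e2 : min ((m:ℝ) * t⁻¹) (n:ℝ) * (t * (m:ℝ)⁻¹) ≤ 1 := by
      calc min ((m:ℝ) * t⁻¹) (n:ℝ) * (t * (m:ℝ)⁻¹) ≤ ((m:ℝ) * t⁻¹) * (t * (m:ℝ)⁻¹) :=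
            mul_le_mul_of_nonneg_right h1 (mul_nonneg ht0.le (inv_nonneg.mpr hmR.le))
        _ = 1 := by field_simp
    linarith
  have h3 : ((1/2) * min ((m:ℝ) * t⁻¹) (n:ℝ)) * B ≤ (S.card : ℝ) * B := by
    calc ((1/2) * min ((m:ℝ) * t⁻¹) (n:ℝ)) * B
        = (1/2) * (min ((m:ℝ) * t⁻¹) (n:ℝ) * B) := by ring
      _ ≤ (1/2) * 2 := by linarith
      _ = 1 := by norm_num
      _ ≤ (S.card : ℝ) * B := hCS
  exact le_of_mul_le_mul_right h3 hBpos
end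

section
/- Let 0 < λ ≤ 1 and suppose W ⊆ V is a nonempty subset equipped with nonnegative weights (a_w)_{w∈W} such that W integrates φ_i exactly for every index i with |μ_i| ≥ λ. Then for every natural number k, writing S_k = {x ∈ V : d(x,W) ≤ k} (which contains W and is therefore nonempty), one has 1/#S_k − 1/n ≤ λ^{2k} · Σ_{w∈W} a_w². -/
open Finset Matrix

/-- Same setting as Statement 0.  For every natural number `k`, writing
`S_k = {x ∈ V : d(x,W) ≤ k}` (which contains `W` and is therefore nonempty), one has
`1/#S_k − 1/n ≤ λ^{2k} · Σ_{w∈W} a_w²`. -/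
theorem graphical_design_sharp_neighborhood_bound
    {V : Type*} [Fintype V] [DecidableEq V]
    (G : SimpleGraph V) [DecidableRel G.Adj]
    (hconn : G.Connected)
    (n : ℕ) (hn : Fintype.card V = n) (hn1 : 0 < n)
    (hdeg : ∀ v : V, 0 < G.degree v)
    (M : Matrix V V ℝ)
    (hM : ∀ u v : V, M u v = if G.Adj u v then ((G.degree v : ℝ))⁻¹ else 0)
    (φ : Fin n → V → ℝ) (μ : Fin n → ℝ)
    (horth : ∀ i j : Fin n, ∑ v : V, φ i v * φ j v = if i = j then 1 else 0)
    (heig : ∀ i : Fin n, M.mulVec (φ i) = μ i • φ i)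
    (hφ0 : ∀ v : V, φ ⟨0, hn1⟩ v = (Real.sqrt n)⁻¹)
    (hμ0 : μ ⟨0, hn1⟩ = 1)
    (lam : ℝ) (hlam : 0 < lam) (hlam1 : lam ≤ 1)
    (W : Finset V) (hW : W.Nonempty)
    (a : V → ℝ) (ha : ∀ w ∈ W, 0 ≤ a w)
    (hint : ∀ i : Fin n, lam ≤ |μ i| →
      ∑ w ∈ W, a w * φ i w = (1 / (n : ℝ)) * ∑ v : V, φ i v) :
    ∀ k : ℕ,
      (({x : V | ∃ w ∈ W, G.dist x w ≤ k}.ncard : ℝ))⁻¹ - 1 / (n : ℝ) ≤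
        lam ^ (2 * k) * ∑ w ∈ W, (a w) ^ 2 := by
  intro k
  classical
  set i0 : Fin n := ⟨0, hn1⟩ with hi0
  have hcn : (0:ℝ) < (n:ℝ) := by exact_mod_cast hn1
  have hsqrtn : Real.sqrt n ≠ 0 := by positivity
  -- the weighted indicator
  set b : V → ℝ := fun v => if v ∈ W then a v else 0 with hb
  have hbsum : ∀ (f : V → ℝ), ∑ v : V, b v * f v = ∑ w ∈ W, a w * f w := by
    intro f
    rw [hb]
    rw [show (∑ v : V, (if v ∈ W then a v else 0) * f v)
        = ∑ v : V, (if v ∈ W then a v * f v else 0) by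
      apply Finset.sum_congr rfl; intro v _; split <;> simp]
    rw [Finset.sum_ite_mem, Finset.univ_inter]
  -- eigen-coefficients
  set c : Fin n → ℝ := fun i => ∑ w ∈ W, a w * φ i w with hc
  have hcb : ∀ i, ∑ v : V, b v * φ i v = c i := fun i => hbsum (φ i)
  -- total weight is 1
  have hμabs : lam ≤ |μ i0| := by rw [hμ0]; simpa using hlam1
  have hasum : ∑ w ∈ W, a w = 1 := by
    have h1 := hint i0 hμabs
    simp only [hφ0] at h1
    rw [← Finset.sum_mul, Finset.sum_const, Finset.card_univ, hn] at h1
    have h2 : (1 / (n:ℝ)) * ((n:ℕ) • (Real.sqrt n)⁻¹) = (Real.sqrt n)⁻¹ := by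
      rw [nsmul_eq_mul]; field_simp
    rw [h2] at h1
    exact mul_right_cancel₀ (inv_ne_zero hsqrtn) (h1.trans (one_mul _).symm)
  -- eigenvectors other than φ₀ sum to zero
  have hsum0 : ∀ i : Fin n, i ≠ i0 → ∑ v : V, φ i v = 0 := by
    intro i hi
    have h1 := horth i i0
    rw [if_neg hi] at h1
    simp only [hφ0] at h1
    rw [← Finset.sum_mul] at h1
    exact (mul_eq_zero.mp h1).resolve_right (inv_ne_zero hsqrtn)
  -- value of c at i0
  have hc0 : c i0 = (Real.sqrt n)⁻¹ := by
    rw [hc]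
    simp only [hφ0]
    rw [← Finset.sum_mul, hasum, one_mul]
  -- c vanishes on large eigenvalues (other than i0)
  have hcvan : ∀ i : Fin n, i ≠ i0 → lam ≤ |μ i| → c i = 0 := by
    intro i hi hli
    have h := hint i hli
    rw [hsum0 i hi, mul_zero] at h
    exact h
  -- dual orthogonality via matrices
  have hdual : ∀ u v : V, ∑ i : Fin n, φ i u * φ i v = if u = v then 1 else 0 := by
    have e : V ≃ Fin n := Fintype.equivFinOfCardEq hn
    set Q : Matrix (Fin n) (Fin n) ℝ := fun i j => φ i (e.symm j) with hQdef
    have hQ : Q * Qᵀ = 1 := by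
      ext i j
      rw [Matrix.mul_apply]
      simp only [Matrix.transpose_apply]
      simp only [hQdef, Matrix.transpose_apply, Matrix.one_apply]
      rw [Equiv.sum_comp e.symm (fun v => φ i v * φ j v)]
      exact horth i j
    have hQ' : Qᵀ * Q = 1 := mul_eq_one_comm.mp hQ
    intro u v
    have h1 := congrFun (congrFun hQ' (e u)) (e v)
    rw [Matrix.mul_apply] at h1
    simp only [Matrix.transpose_apply] at h1
    simp only [hQdef, Matrix.transpose_apply, Matrix.one_apply,
      Equiv.symm_apply_apply, EmbeddingLike.apply_eq_iff_eq] at h1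
    exact h1
  -- expansion of b in the eigenbasis
  have hexp : ∀ v : V, ∑ i : Fin n, c i * φ i v = b v := by
    intro v
    calc ∑ i : Fin n, c i * φ i v
        = ∑ i : Fin n, ∑ u : V, b u * φ i u * φ i v := by
          refine Finset.sum_congr rfl fun i _ => ?_
          rw [← hcb i, Finset.sum_mul]
      _ = ∑ u : V, b u * ∑ i : Fin n, φ i u * φ i v := by
          rw [Finset.sum_comm]
          refine Finset.sum_congr rfl fun u _ => ?_
          rw [Finset.mul_sum]
          refine Finset.sum_congr rfl fun i _ => ?_
          ring
      _ = b v := by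
          simp only [hdual, mul_ite, mul_one, mul_zero]
          simpa using Finset.sum_ite_eq' Finset.univ v b
  -- Parseval
  have hpars : ∑ i : Fin n, (c i) ^ 2 = ∑ w ∈ W, (a w) ^ 2 := by
    have h1 : ∑ i : Fin n, (c i) ^ 2 = ∑ v : V, b v * b v := by
      calc ∑ i : Fin n, (c i) ^ 2
          = ∑ i : Fin n, ∑ v : V, c i * (b v * φ i v) := by
            refine Finset.sum_congr rfl fun i _ => ?_
            rw [← Finset.mul_sum, hcb i, sq]
        _ = ∑ v : V, b v * ∑ i : Fin n, c i * φ i v := by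
            rw [Finset.sum_comm]
            refine Finset.sum_congr rfl fun v _ => ?_
            rw [Finset.mul_sum]
            refine Finset.sum_congr rfl fun i _ => ?_
            ring
        _ = ∑ v : V, b v * b v := by
            refine Finset.sum_congr rfl fun v _ => ?_
            rw [hexp v]
    rw [h1]
    have h2 := hbsum b
    rw [h2]
    refine Finset.sum_congr rfl fun w hw => ?_
    rw [hb]; simp [hw, sq]
  -- powers of M act on eigenvectors
  have heigk : ∀ (m : ℕ) (i : Fin n), (M ^ m).mulVec (φ i) = (μ i ^ m) • φ i := by
    intro m i
    induction m with
    | zero => simp [Matrix.one_mulVec]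
    | succ m ih =>
        rw [pow_succ, ← Matrix.mulVec_mulVec, heig i, Matrix.mulVec_smul, ih,
          smul_smul, pow_succ]
        ring_nf
  -- the diffused vector g
  set g : V → ℝ := (M ^ k).mulVec b with hgdef
  have hg : ∀ v : V, g v = ∑ i : Fin n, (c i * μ i ^ k) * φ i v := by
    intro v
    rw [hgdef]
    have hbv : b = fun u => ∑ i : Fin n, c i * φ i u := by
      funext u; rw [hexp u]
    calc (M ^ k).mulVec b v
        = ∑ u : V, (M ^ k) v u * ∑ i : Fin n, c i * φ i u := by
          rw [Matrix.mulVec, dotProduct]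
          refine Finset.sum_congr rfl fun u _ => ?_
          rw [← hexp u]
      _ = ∑ i : Fin n, c i * ∑ u : V, (M ^ k) v u * φ i u := by
          rw [show (∑ u : V, (M ^ k) v u * ∑ i : Fin n, c i * φ i u)
              = ∑ u : V, ∑ i : Fin n, c i * ((M ^ k) v u * φ i u) by
            refine Finset.sum_congr rfl fun u _ => ?_
            rw [Finset.mul_sum]
            refine Finset.sum_congr rfl fun i _ => ?_; ring]
          rw [Finset.sum_comm]
          refine Finset.sum_congr rfl fun i _ => ?_
          rw [Finset.mul_sum]
      _ = ∑ i : Fin n, (c i * μ i ^ k) * φ i v := by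
          refine Finset.sum_congr rfl fun i _ => ?_
          have := congrFun (heigk k i) v
          rw [Matrix.mulVec, dotProduct] at this
          rw [this]
          simp [mul_assoc]
  -- norm of g
  have hnormg : ∑ v : V, (g v) ^ 2 = ∑ i : Fin n, (c i * μ i ^ k) ^ 2 := by
    set d : Fin n → ℝ := fun i => c i * μ i ^ k with hd
    calc ∑ v : V, (g v) ^ 2
        = ∑ v : V, ∑ i : Fin n, ∑ j : Fin n, (d i * d j) * (φ i v * φ j v) := by
          refine Finset.sum_congr rfl fun v _ => ?_
          rw [sq, hg v, Finset.sum_mul_sum]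
          refine Finset.sum_congr rfl fun i _ => ?_
          refine Finset.sum_congr rfl fun j _ => ?_
          ring
      _ = ∑ i : Fin n, ∑ j : Fin n, (d i * d j) * ∑ v : V, φ i v * φ j v := by
          rw [Finset.sum_comm]
          refine Finset.sum_congr rfl fun i _ => ?_
          rw [Finset.sum_comm]
          refine Finset.sum_congr rfl fun j _ => ?_
          rw [Finset.mul_sum]
      _ = ∑ i : Fin n, (d i) ^ 2 := by
          refine Finset.sum_congr rfl fun i _ => ?_
          simp only [horth, mul_ite, mul_one, mul_zero]
          rw [Finset.sum_ite_eq Finset.univ i (fun j => d i * d j)]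
          simp [sq]
  -- mass conservation
  have hcol : ∀ v : V, ∑ u : V, M u v = 1 := by
    intro v
    simp only [hM]
    rw [Finset.sum_ite, Finset.sum_const_zero, add_zero, Finset.sum_const]
    have hfil : Finset.univ.filter (fun u => G.Adj u v) = G.neighborFinset v := by
      ext u
      simp [SimpleGraph.adj_comm]
    rw [hfil, SimpleGraph.card_neighborFinset_eq_degree, nsmul_eq_mul]
    rw [mul_inv_cancel₀]
    exact_mod_cast (hdeg v).ne'
  have hmass1 : ∀ (y : V → ℝ), ∑ u : V, M.mulVec y u = ∑ u : V, y u := by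
    intro y
    calc ∑ u : V, M.mulVec y u
        = ∑ u : V, ∑ v : V, M u v * y v := by
          refine Finset.sum_congr rfl fun u _ => ?_
          rw [Matrix.mulVec, dotProduct]
      _ = ∑ v : V, (∑ u : V, M u v) * y v := by
          rw [Finset.sum_comm]
          refine Finset.sum_congr rfl fun v _ => ?_
          rw [Finset.sum_mul]
      _ = ∑ v : V, y v := by
          refine Finset.sum_congr rfl fun v _ => ?_
          rw [hcol v, one_mul]
  have hmass : ∑ u : V, g u = 1 := by
    rw [hgdef]
    have : ∀ m : ℕ, ∑ u : V, (M ^ m).mulVec b u = ∑ u : V, b u := by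
      intro m
      induction m with
      | zero => simp [Matrix.one_mulVec]
      | succ m ih =>
          rw [pow_succ', ← Matrix.mulVec_mulVec, hmass1, ih]
    rw [this k]
    have := hbsum (fun _ => (1:ℝ))
    simpa [hasum] using this
  -- support of M^k
  have hMk0 : ∀ (m : ℕ) (x v : V), m < G.dist x v → (M ^ m) x v = 0 := by
    intro m
    induction m with
    | zero =>
        intro x v h
        have hxv : x ≠ v := by
          intro he; subst he; simp [SimpleGraph.dist_self] at h
        simp [Matrix.one_apply, hxv]
    | succ m ih =>
        intro x v h
        rw [pow_succ', Matrix.mul_apply]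
        apply Finset.sum_eq_zero
        intro u _
        by_cases hadj : G.Adj x u
        · have h1 : G.dist x v ≤ G.dist x u + G.dist u v := hconn.dist_triangle
          have h2 : G.dist x u = 1 := SimpleGraph.dist_eq_one_iff_adj.mpr hadj
          have h3 : m < G.dist u v := by omega
          rw [ih u v h3, mul_zero]
        · rw [hM x u, if_neg hadj, zero_mul]
  -- the neighbourhood finset S
  set S : Finset V := Finset.univ.filter (fun x => ∃ w ∈ W, G.dist x w ≤ k) with hS
  have hsetS : {x : V | ∃ w ∈ W, G.dist x w ≤ k} = ↑S := by
    ext x; simp [hS]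
  have hSne : S.Nonempty := by
    obtain ⟨w, hw⟩ := hW
    refine ⟨w, ?_⟩
    simp only [hS, Finset.mem_filter, Finset.mem_univ, true_and]
    exact ⟨w, hw, by rw [SimpleGraph.dist_self]; omega⟩
  have hScard : (0:ℝ) < (S.card : ℝ) := by
    exact_mod_cast Finset.card_pos.mpr hSne
  -- g vanishes off S
  have hsupp : ∀ x : V, x ∉ S → g x = 0 := by
    intro x hx
    rw [hgdef, Matrix.mulVec, dotProduct]
    apply Finset.sum_eq_zero
    intro v _
    by_cases hv : v ∈ W
    · have hdist : k < G.dist x v := by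
        by_contra hle
        exact hx (by simp [hS]; exact ⟨v, hv, by omega⟩)
      rw [hMk0 k x v hdist, zero_mul]
    · rw [hb]; simp [hv]
  -- Cauchy–Schwarz
  have hgS : ∑ x ∈ S, g x = 1 := by
    rw [← hmass]
    exact Finset.sum_subset (Finset.subset_univ S) (fun x _ hx => hsupp x hx)
  have hCS : (1:ℝ) ≤ (S.card : ℝ) * ∑ v : V, (g v) ^ 2 := by
    have h1 := Finset.sum_mul_sq_le_sq_mul_sq S (fun _ => (1:ℝ)) g
    simp only [one_mul, one_pow, Finset.sum_const, nsmul_eq_mul, mul_one] at h1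
    rw [hgS] at h1
    have h2 : ∑ x ∈ S, (g x) ^ 2 ≤ ∑ v : V, (g v) ^ 2 :=
      Finset.sum_le_sum_of_subset_of_nonneg (Finset.subset_univ S)
        (fun v _ _ => sq_nonneg _)
    calc (1:ℝ) = 1 ^ 2 := by norm_num
      _ ≤ (S.card : ℝ) * ∑ x ∈ S, (g x) ^ 2 := h1
      _ ≤ (S.card : ℝ) * ∑ v : V, (g v) ^ 2 := by
          exact mul_le_mul_of_nonneg_left h2 (le_of_lt hScard)
  -- bound the norm
  have hnormbound : ∑ v : V, (g v) ^ 2 ≤ 1 / (n:ℝ) + lam ^ (2 * k) * ∑ w ∈ W, (a w) ^ 2 := by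
    rw [hnormg]
    rw [← Finset.add_sum_erase Finset.univ (fun i => (c i * μ i ^ k) ^ 2)
      (Finset.mem_univ i0)]
    have hterm0 : (c i0 * μ i0 ^ k) ^ 2 = 1 / (n:ℝ) := by
      rw [hc0, hμ0, one_pow, mul_one, ← Real.sqrt_inv, Real.sq_sqrt (by positivity)]
      rw [one_div]
    rw [hterm0]
    have hrest : ∑ i ∈ Finset.univ.erase i0, (c i * μ i ^ k) ^ 2
        ≤ lam ^ (2 * k) * ∑ w ∈ W, (a w) ^ 2 := by
      have h1 : ∑ i ∈ Finset.univ.erase i0, (c i * μ i ^ k) ^ 2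
          ≤ ∑ i ∈ Finset.univ.erase i0, lam ^ (2 * k) * (c i) ^ 2 := by
        apply Finset.sum_le_sum
        intro i hi
        have hine : i ≠ i0 := Finset.ne_of_mem_erase hi
        by_cases hli : lam ≤ |μ i|
        · rw [hcvan i hine hli]
          simp
        · push_neg at hli
          have hμle : |μ i| ≤ lam := le_of_lt hli
          have h2 : (μ i ^ k) ^ 2 ≤ lam ^ (2 * k) := by
            have : (μ i ^ k) ^ 2 = |μ i| ^ (2 * k) := by
              rw [← sq_abs (μ i ^ k), abs_pow, ← pow_mul, mul_comm k 2]
            rw [this]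
            exact pow_le_pow_left₀ (abs_nonneg _) hμle _
          calc (c i * μ i ^ k) ^ 2 = (μ i ^ k) ^ 2 * (c i) ^ 2 := by ring
            _ ≤ lam ^ (2 * k) * (c i) ^ 2 :=
                mul_le_mul_of_nonneg_right h2 (sq_nonneg _)
      have h3 : ∑ i ∈ Finset.univ.erase i0, (c i) ^ 2 ≤ ∑ i : Fin n, (c i) ^ 2 :=
        Finset.sum_le_sum_of_subset_of_nonneg (Finset.erase_subset _ _)
          (fun i _ _ => sq_nonneg _)
      calc ∑ i ∈ Finset.univ.erase i0, (c i * μ i ^ k) ^ 2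
          ≤ ∑ i ∈ Finset.univ.erase i0, lam ^ (2 * k) * (c i) ^ 2 := h1
        _ = lam ^ (2 * k) * ∑ i ∈ Finset.univ.erase i0, (c i) ^ 2 := by
            rw [Finset.mul_sum]
        _ ≤ lam ^ (2 * k) * ∑ i : Fin n, (c i) ^ 2 :=
            mul_le_mul_of_nonneg_left h3 (by positivity)
        _ = lam ^ (2 * k) * ∑ w ∈ W, (a w) ^ 2 := by rw [hpars]
    linarith
  -- put everything together
  rw [hsetS, Set.ncard_coe_finset]
  have hfinal : (S.card : ℝ)⁻¹ ≤ 1 / (n:ℝ) + lam ^ (2 * k) * ∑ w ∈ W, (a w) ^ 2 := by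
    have h0 : (1:ℝ) ≤ (S.card : ℝ) * (1 / (n:ℝ) + lam ^ (2 * k) * ∑ w ∈ W, (a w) ^ 2) :=
      le_trans hCS (mul_le_mul_of_nonneg_left hnormbound (le_of_lt hScard))
    rw [← one_div, div_le_iff₀ hScard]
    rw [mul_comm] at h0
    exact h0
  linarith
end

section
/- Let 0 < λ ≤ 1 and suppose W ⊆ V is a nonempty subset equipped with nonnegative weights (a_w)_{w∈W} such that W integrates φ_i exactly for every index i with |μ_i| ≥ λ. Set f = Σ_{w∈W} a_w δ_w − (1/n)·𝟙, where δ_w is the indicator vector of the vertex w and 𝟙 is the all-ones vector. Then for every natural number k, ‖M^k f‖² ≤ λ^{2k} · Σ_{w∈W} a_w². -/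
open Finset

/-- In the setting of Statement 0, set
`f = Σ_{w∈W} a_w δ_w − (1/n)·𝟙`.  Then for every natural number `k`,
`‖M^k f‖² ≤ λ^{2k} · Σ_{w∈W} a_w²`. -/
theorem graphical_design_diffusion_upper_bound
    {V : Type*} [Fintype V] [DecidableEq V]
    (G : SimpleGraph V) [DecidableRel G.Adj]
    (hconn : G.Connected)
    (n : ℕ) (hn : Fintype.card V = n) (hn1 : 0 < n)
    (hdeg : ∀ v : V, 0 < G.degree v)
    (M : Matrix V V ℝ)
    (hM : ∀ u v : V, M u v = if G.Adj u v then ((G.degree v : ℝ))⁻¹ else 0)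
    (φ : Fin n → V → ℝ) (μ : Fin n → ℝ)
    (horth : ∀ i j : Fin n, ∑ v : V, φ i v * φ j v = if i = j then 1 else 0)
    (heig : ∀ i : Fin n, M.mulVec (φ i) = μ i • φ i)
    (hφ0 : ∀ v : V, φ ⟨0, hn1⟩ v = (Real.sqrt n)⁻¹)
    (hμ0 : μ ⟨0, hn1⟩ = 1)
    (lam : ℝ) (hlam : 0 < lam) (hlam1 : lam ≤ 1)
    (W : Finset V) (hW : W.Nonempty)
    (a : V → ℝ) (ha : ∀ w ∈ W, 0 ≤ a w)
    (hint : ∀ i : Fin n, lam ≤ |μ i| →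
      ∑ w ∈ W, a w * φ i w = (1 / (n : ℝ)) * ∑ v : V, φ i v)
    (f : V → ℝ)
    (hf : ∀ v : V, f v = (∑ w ∈ W, a w * (if v = w then 1 else 0)) - 1 / (n : ℝ)) :
    ∀ k : ℕ, ∑ v : V, ((M ^ k).mulVec f v) ^ 2 ≤ lam ^ (2 * k) * ∑ w ∈ W, (a w) ^ 2 := by
  intro k
  have hn0 : (0:ℝ) < n := by exact_mod_cast hn1
  -- completeness of the eigenbasis
  have hcomp : ∀ u v : V, ∑ i : Fin n, φ i u * φ i v = if u = v then 1 else 0 := by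
    set e : V ≃ Fin n := Fintype.equivFinOfCardEq hn with he
    have hA : (Matrix.of fun i j => φ i (e.symm j)) *
        Matrix.transpose (Matrix.of fun i j => φ i (e.symm j)) = 1 := by
      ext i j
      simp only [Matrix.mul_apply, Matrix.transpose_apply, Matrix.of_apply, Matrix.one_apply]
      rw [← horth i j]
      exact Equiv.sum_comp e.symm (fun v => φ i v * φ j v)
    have hA' := mul_eq_one_comm.mp hA
    intro u v
    have h2 := congrFun (congrFun hA' (e u)) (e v)
    simp only [Matrix.mul_apply, Matrix.transpose_apply, Matrix.of_apply, Matrix.one_apply,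
      Equiv.symm_apply_apply, EmbeddingLike.apply_eq_iff_eq] at h2
    exact h2
  -- Parseval-type computation
  have key : ∀ d : Fin n → ℝ, ∑ v : V, (∑ i : Fin n, d i * φ i v) ^ 2 = ∑ i, (d i) ^ 2 := by
    intro d
    have h1 : ∀ v : V, (∑ i : Fin n, d i * φ i v) ^ 2
        = ∑ i : Fin n, ∑ j : Fin n, (d i * d j) * (φ i v * φ j v) := by
      intro v
      rw [sq, Finset.sum_mul_sum]
      apply Finset.sum_congr rfl; intro i _
      apply Finset.sum_congr rfl; intro j _
      ring
    simp_rw [h1]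
    rw [Finset.sum_comm]
    have h2 : ∀ i : Fin n, ∑ v : V, ∑ j : Fin n, (d i * d j) * (φ i v * φ j v)
        = (d i) ^ 2 := by
      intro i
      rw [Finset.sum_comm]
      have h3 : ∀ j : Fin n, ∑ v : V, (d i * d j) * (φ i v * φ j v)
          = (d i * d j) * (if i = j then 1 else 0) := by
        intro j
        rw [← Finset.mul_sum, horth]
      simp_rw [h3]
      simp [mul_ite, sq]
    exact Finset.sum_congr rfl fun i _ => h2 i
  -- coefficients
  set c : Fin n → ℝ := fun i => ∑ v : V, f v * φ i v with hc
  have hexp : ∀ v, f v = ∑ i : Fin n, c i * φ i v := by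
    intro v
    have h1 : f v = ∑ u : V, f u * (if u = v then 1 else 0) := by simp
    rw [h1]
    simp_rw [← hcomp, Finset.mul_sum]
    rw [Finset.sum_comm]
    apply Finset.sum_congr rfl; intro i _
    rw [hc]
    simp only [Finset.sum_mul]
    apply Finset.sum_congr rfl; intro u _
    ring
  -- eigenvalue of powers
  have heigk : ∀ (m : ℕ) (i : Fin n), (M ^ m).mulVec (φ i) = (μ i ^ m) • φ i := by
    intro m i
    induction m with
    | zero => simp [Matrix.one_mulVec]
    | succ m ih =>
      rw [pow_succ, ← Matrix.mulVec_mulVec, heig i, Matrix.mulVec_smul, ih, smul_smul,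
        pow_succ]
      ring_nf
  -- action of M^k on f
  have hMkf : ∀ v : V, (M ^ k).mulVec f v = ∑ i : Fin n, (c i * μ i ^ k) * φ i v := by
    intro v
    have h1 : (M ^ k).mulVec f v = ∑ u : V, (M ^ k) v u * f u := rfl
    rw [h1]
    have h2 : ∀ u : V, (M ^ k) v u * f u
        = ∑ i : Fin n, c i * ((M ^ k) v u * φ i u) := by
      intro u
      rw [hexp u, Finset.mul_sum]
      apply Finset.sum_congr rfl; intro i _
      ring
    simp_rw [h2]
    rw [Finset.sum_comm]
    apply Finset.sum_congr rfl; intro i _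
    rw [← Finset.mul_sum]
    have h3 : ∑ u : V, (M ^ k) v u * φ i u = (M ^ k).mulVec (φ i) v := rfl
    rw [h3, heigk k i]
    simp [Pi.smul_apply]
    ring
  -- vanishing coefficients
  have hczero : ∀ i : Fin n, lam ≤ |μ i| → c i = 0 := by
    intro i hi
    have h0 := hint i hi
    rw [hc]
    simp_rw [hf, sub_mul]
    rw [Finset.sum_sub_distrib]
    have h1 : ∑ v : V, (∑ w ∈ W, a w * (if v = w then 1 else 0)) * φ i v
        = ∑ w ∈ W, a w * φ i w := by
      simp_rw [Finset.sum_mul]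
      rw [Finset.sum_comm]
      apply Finset.sum_congr rfl; intro w _
      have : ∀ v : V, a w * (if v = w then 1 else 0) * φ i v
          = if v = w then a w * φ i w else 0 := by
        intro v
        by_cases hv : v = w <;> simp [hv]
      simp_rw [this]
      simp
    have h2 : ∑ v : V, (1 / (n : ℝ)) * φ i v = (1 / (n : ℝ)) * ∑ v : V, φ i v := by
      rw [Finset.mul_sum]
    rw [h1, h2, h0, sub_self]
  -- total weight is 1
  have hS : ∑ w ∈ W, a w = 1 := by
    have habs : lam ≤ |μ ⟨0, hn1⟩| := by rw [hμ0, abs_one]; exact hlam1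
    have h0 := hint ⟨0, hn1⟩ habs
    simp_rw [hφ0] at h0
    rw [← Finset.sum_mul, Finset.sum_const, Finset.card_univ, hn, nsmul_eq_mul] at h0
    have hinv : ((Real.sqrt n)⁻¹ : ℝ) ≠ 0 := by
      have : (0:ℝ) < Real.sqrt n := Real.sqrt_pos.mpr hn0
      positivity
    have : (1 / (n : ℝ)) * ((n : ℝ) * (Real.sqrt n)⁻¹) = (Real.sqrt n)⁻¹ := by
      field_simp
    rw [this] at h0
    field_simp at h0
    exact h0
  -- norm of f bounded
  have hfnorm : ∑ v : V, f v ^ 2 ≤ ∑ w ∈ W, (a w) ^ 2 := by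
    have hg : ∀ v : V, (∑ w ∈ W, a w * (if v = w then 1 else 0))
        = if v ∈ W then a v else 0 := by
      intro v
      by_cases hv : v ∈ W
      · rw [Finset.sum_eq_single v]
        · simp [hv]
        · intro w hw hne; simp [Ne.symm hne]
        · intro h; exact absurd hv h
      · simp only [hv, if_false]
        apply Finset.sum_eq_zero
        intro w hw
        have : v ≠ w := fun h => hv (h ▸ hw)
        simp [this]
    have e1 : ∀ v : V, f v ^ 2
        = (if v ∈ W then (a v) ^ 2 else 0)
          - (2 / (n : ℝ)) * (if v ∈ W then a v else 0) + 1 / (n : ℝ) ^ 2 := by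
      intro v
      rw [hf v, hg v]
      by_cases hv : v ∈ W <;> simp [hv] <;> ring
    simp_rw [e1]
    rw [Finset.sum_add_distrib, Finset.sum_sub_distrib, ← Finset.mul_sum]
    have hs1 : ∑ v : V, (if v ∈ W then (a v) ^ 2 else 0) = ∑ w ∈ W, (a w) ^ 2 := by
      rw [Finset.sum_ite_mem, Finset.univ_inter]
    have hs2 : ∑ v : V, (if v ∈ W then a v else 0) = 1 := by
      rw [Finset.sum_ite_mem, Finset.univ_inter, hS]
    have hs3 : ∑ _v : V, (1 / (n : ℝ) ^ 2) = 1 / (n : ℝ) := by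
      rw [Finset.sum_const, Finset.card_univ, hn, nsmul_eq_mul]
      field_simp
    rw [hs1, hs2, hs3, mul_one]
    have h1n : (1:ℝ) / n ≤ 2 / n := by gcongr <;> norm_num
    linarith
  -- assemble
  calc ∑ v : V, ((M ^ k).mulVec f v) ^ 2
      = ∑ i : Fin n, (c i * μ i ^ k) ^ 2 := by
        simp_rw [hMkf]; exact key _
    _ ≤ ∑ i : Fin n, lam ^ (2 * k) * (c i) ^ 2 := by
        apply Finset.sum_le_sum
        intro i _
        by_cases h : lam ≤ |μ i|
        · rw [hczero i h]
          simp
        · push_neg at h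
          have h1 : (c i * μ i ^ k) ^ 2 = (c i) ^ 2 * ((μ i ^ 2) ^ k) := by ring
          have h2 : (μ i ^ 2) ^ k ≤ (lam ^ 2) ^ k := by
            apply pow_le_pow_left₀ (sq_nonneg _)
            calc μ i ^ 2 = |μ i| ^ 2 := (sq_abs _).symm
              _ ≤ lam ^ 2 := by
                apply pow_le_pow_left₀ (abs_nonneg _) h.le
          rw [h1, mul_comm (lam ^ (2*k)), pow_mul]
          exact mul_le_mul_of_nonneg_left h2 (sq_nonneg _)
    _ = lam ^ (2 * k) * ∑ i : Fin n, (c i) ^ 2 := by rw [Finset.mul_sum]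
    _ = lam ^ (2 * k) * ∑ v : V, f v ^ 2 := by
        congr 1
        rw [← key c]
        apply Finset.sum_congr rfl
        intro v _
        rw [← hexp v]
    _ ≤ lam ^ (2 * k) * ∑ w ∈ W, (a w) ^ 2 := by
        apply mul_le_mul_of_nonneg_left hfnorm (pow_nonneg hlam.le _)
end

section
/- Let 0 < λ ≤ 1 and suppose W ⊆ V is a nonempty subset equipped with nonnegative weights (a_w)_{w∈W} such that W integrates φ_i exactly for every index i with |μ_i| ≥ λ. Set g = Σ_{w∈W} a_w δ_w and f = g − (1/n)·𝟙, where δ_w is the indicator vector of w and 𝟙 is the all-ones vector. Then for every natural number k, M^k f = Σ_{i : |μ_i| < λ} μ_i^k · ⟨g, φ_i⟩ · φ_i. -/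
open Finset

/-- In the setting of Statement 0, set `g = Σ_{w∈W} a_w δ_w` and
`f = g − (1/n)·𝟙`.  Then for every natural number `k`,
`M^k f = Σ_{i : |μ_i| < λ} μ_i^k · ⟨g, φ_i⟩ · φ_i`. -/
theorem graphical_design_diffusion_expansion
    {V : Type*} [Fintype V] [DecidableEq V]
    (G : SimpleGraph V) [DecidableRel G.Adj]
    (hconn : G.Connected)
    (n : ℕ) (hn : Fintype.card V = n) (hn1 : 0 < n)
    (hdeg : ∀ v : V, 0 < G.degree v)
    (M : Matrix V V ℝ)
    (hM : ∀ u v : V, M u v = if G.Adj u v then ((G.degree v : ℝ))⁻¹ else 0)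
    (φ : Fin n → V → ℝ) (μ : Fin n → ℝ)
    (horth : ∀ i j : Fin n, ∑ v : V, φ i v * φ j v = if i = j then 1 else 0)
    (heig : ∀ i : Fin n, M.mulVec (φ i) = μ i • φ i)
    (hφ0 : ∀ v : V, φ ⟨0, hn1⟩ v = (Real.sqrt n)⁻¹)
    (hμ0 : μ ⟨0, hn1⟩ = 1)
    (lam : ℝ) (hlam : 0 < lam) (hlam1 : lam ≤ 1)
    (W : Finset V) (hW : W.Nonempty)
    (a : V → ℝ) (ha : ∀ w ∈ W, 0 ≤ a w)
    (hint : ∀ i : Fin n, lam ≤ |μ i| →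
      ∑ w ∈ W, a w * φ i w = (1 / (n : ℝ)) * ∑ v : V, φ i v)
    (g f : V → ℝ)
    (hg : ∀ v : V, g v = ∑ w ∈ W, a w * (if v = w then 1 else 0))
    (hf : ∀ v : V, f v = g v - 1 / (n : ℝ)) :
    ∀ (k : ℕ) (v : V),
      (M ^ k).mulVec f v =
        ∑ i ∈ univ.filter (fun i : Fin n => |μ i| < lam),
          μ i ^ k * (∑ u : V, g u * φ i u) * φ i v := by
  classical
  set S : Finset (Fin n) := univ.filter (fun i : Fin n => |μ i| < lam) with hS
  -- an equivalence between Fin n and V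
  have hcard : Fintype.card (Fin n) = Fintype.card V := by simp [hn]
  let e : Fin n ≃ V := Fintype.equivOfCardEq hcard
  -- completeness of the orthonormal system
  have hcomplete : ∀ u v : V, ∑ i : Fin n, φ i u * φ i v = if u = v then 1 else 0 := by
    set P : Matrix (Fin n) V ℝ := Matrix.of φ with hP
    have hPPt : P * P.transpose = 1 := by
      ext i j
      simpa [Matrix.mul_apply, Matrix.one_apply, P] using horth i j
    set Q : Matrix V V ℝ := P.submatrix e.symm id with hQ
    have hQQt : Q * Q.transpose = 1 := by
      ext u v
      have := congrFun (congrFun hPPt (e.symm u)) (e.symm v)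
      simpa [Matrix.mul_apply, Matrix.one_apply, Q, P,
        Equiv.symm_apply_eq] using this
    have hQtQ : Q.transpose * Q = 1 := mul_eq_one_comm.mp hQQt
    intro u v
    have h := congrFun (congrFun hQtQ u) v
    simp only [Matrix.mul_apply, Matrix.transpose_apply, Matrix.one_apply, Q, P,
      Matrix.submatrix_apply, Matrix.of_apply, id] at h
    rw [← Equiv.sum_comp e.symm (fun i => φ i u * φ i v)]
    exact h
  -- 0 is not in S
  have hS0 : (⟨0, hn1⟩ : Fin n) ∉ S := by
    simp [hS, hμ0, abs_one, not_lt, hlam1]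
  -- sums of eigenvectors in S vanish
  have hsum0 : ∀ i ∈ S, ∑ v : V, φ i v = 0 := by
    intro i hi
    have hne : i ≠ ⟨0, hn1⟩ := by rintro rfl; exact hS0 hi
    have h := horth i ⟨0, hn1⟩
    rw [if_neg hne] at h
    have hsn : (Real.sqrt n)⁻¹ ≠ 0 := by
      have : (0:ℝ) < Real.sqrt n := Real.sqrt_pos.mpr (by exact_mod_cast hn1)
      positivity
    simp only [hφ0] at h
    rw [← Finset.sum_mul] at h
    rcases mul_eq_zero.mp h with h' | h'
    · exact h'
    · exact absurd h' hsn
  -- inner products with g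
  have hgφ : ∀ i : Fin n, ∑ u : V, g u * φ i u = ∑ w ∈ W, a w * φ i w := by
    intro i
    simp only [hg, Finset.sum_mul]
    rw [Finset.sum_comm]
    refine Finset.sum_congr rfl fun w hw => ?_
    simp [ite_mul, mul_assoc]
  -- expansion of f
  have hfexp : ∀ v : V, f v = ∑ i ∈ S, (∑ u : V, g u * φ i u) * φ i v := by
    intro v
    have h1 : f v = ∑ i : Fin n, (∑ u : V, f u * φ i u) * φ i v := by
      calc f v = ∑ u : V, f u * (if u = v then 1 else 0) := by simp
        _ = ∑ u : V, f u * ∑ i : Fin n, φ i u * φ i v := by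
            refine Finset.sum_congr rfl fun u _ => ?_
            rw [hcomplete u v]
        _ = ∑ u : V, ∑ i : Fin n, f u * (φ i u * φ i v) := by
            simp [Finset.mul_sum]
        _ = ∑ i : Fin n, ∑ u : V, f u * (φ i u * φ i v) := Finset.sum_comm
        _ = ∑ i : Fin n, (∑ u : V, f u * φ i u) * φ i v := by
            simp [Finset.sum_mul, mul_assoc]
    have hcoef : ∀ i : Fin n,
        ∑ u : V, f u * φ i u = (∑ u : V, g u * φ i u) - (1 / (n:ℝ)) * ∑ u : V, φ i u := by
      intro i
      simp only [hf, sub_mul]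
      rw [Finset.sum_sub_distrib, ← Finset.mul_sum]
    rw [h1]
    rw [← Finset.sum_filter_add_sum_filter_not univ (fun i : Fin n => |μ i| < lam)
      (fun i => (∑ u : V, f u * φ i u) * φ i v), ← hS]
    have hz : ∑ i ∈ univ.filter (fun i : Fin n => ¬ |μ i| < lam),
        (∑ u : V, f u * φ i u) * φ i v = 0 := by
      refine Finset.sum_eq_zero fun i hi => ?_
      have hge : lam ≤ |μ i| := not_lt.mp (Finset.mem_filter.mp hi).2
      have := hint i hge
      rw [hcoef i, hgφ i, this]
      ring
    rw [hz, add_zero]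
    refine Finset.sum_congr rfl fun i hi => ?_
    rw [hcoef i, hsum0 i hi]
    ring
  -- main induction
  intro k
  induction k with
  | zero =>
      intro v
      simp only [pow_zero, Matrix.one_mulVec]
      rw [hfexp v]
      refine Finset.sum_congr rfl fun i _ => by ring
  | succ k ih =>
      intro v
      have hstep : (M ^ (k + 1)).mulVec f = M.mulVec ((M ^ k).mulVec f) := by
        rw [pow_succ']
        exact (Matrix.mulVec_mulVec _ _ _).symm
      rw [hstep]
      have hx : (M ^ k).mulVec f = fun u => ∑ i ∈ S, μ i ^ k * (∑ u' : V, g u' * φ i u') * φ i u :=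
        funext ih
      rw [hx]
      show ∑ u : V, M v u * ∑ i ∈ S, μ i ^ k * (∑ u' : V, g u' * φ i u') * φ i u = _
      rw [show (∑ u : V, M v u * ∑ i ∈ S, μ i ^ k * (∑ u' : V, g u' * φ i u') * φ i u)
          = ∑ i ∈ S, ∑ u : V, M v u * (μ i ^ k * (∑ u' : V, g u' * φ i u') * φ i u) by
        rw [← Finset.sum_comm]
        exact Finset.sum_congr rfl fun u _ => Finset.mul_sum _ _ _]
      refine Finset.sum_congr rfl fun i _ => ?_
      have hMi : ∑ u : V, M v u * φ i u = μ i * φ i v := by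
        have := congrFun (heig i) v
        simpa [Matrix.mulVec, dotProduct] using this
      calc ∑ u : V, M v u * (μ i ^ k * (∑ u' : V, g u' * φ i u') * φ i u)
          = ∑ u : V, μ i ^ k * (∑ u' : V, g u' * φ i u') * (M v u * φ i u) :=
            Finset.sum_congr rfl fun u _ => by ring
        _ = μ i ^ k * (∑ u' : V, g u' * φ i u') * ∑ u : V, M v u * φ i u :=
            (Finset.mul_sum _ _ _).symm
        _ = μ i ^ (k + 1) * (∑ u' : V, g u' * φ i u') * φ i v := by
            rw [hMi]; ring
end

section
/- Suppose G is d-regular with d ≥ 1, let 0 < λ ≤ 1, and suppose the nonempty subset W ⊆ V, equipped with the equal weights a_w = 1/|W|, integrates φ_i exactly for every index i with |μ_i| ≥ λ. If 2·|W|·(d+1) < n, then λ² ≥ 1/(2(d+1)). In particular, an equal-weight subset occupying less than a 1/(2(d+1)) fraction of the vertices can never integrate exactly all eigenvectors whose eigenvalue satisfies |μ_i| ≥ λ for any λ < (2(d+1))^{-1/2}. -/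
open Finset Matrix

lemma ortho_complete {V : Type*} [Fintype V] [DecidableEq V] (n : ℕ)
    (hn : Fintype.card V = n) (φ : Fin n → V → ℝ)
    (horth : ∀ i j : Fin n, ∑ v : V, φ i v * φ j v = if i = j then 1 else 0)
    (v w : V) : ∑ i : Fin n, φ i v * φ i w = if v = w then 1 else 0 := by
  classical
  let e : Fin n ≃ V := (Fintype.equivFinOfCardEq hn).symm
  let P : Matrix (Fin n) (Fin n) ℝ := Matrix.of (fun i j => φ i (e j))
  have hPPT : P * Pᵀ = 1 := by
    ext i j
    have := horth i j
    rw [← Equiv.sum_comp e (fun v => φ i v * φ j v)] at this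
    simpa [Matrix.mul_apply, Matrix.one_apply, P] using this
  have hPTP : Pᵀ * P = 1 := mul_eq_one_comm.mp hPPT
  have h2 := congrFun (congrFun hPTP (e.symm v)) (e.symm w)
  simp only [Matrix.mul_apply, Matrix.transpose_apply, Matrix.one_apply, P,
    Matrix.of_apply, Equiv.apply_symm_apply] at h2
  rw [h2]
  simp [Equiv.symm_apply_eq, EmbeddingLike.apply_eq_iff_eq, eq_comm]

lemma parseval_aux {V : Type*} [Fintype V] [DecidableEq V] (n : ℕ)
    (hn : Fintype.card V = n) (φ : Fin n → V → ℝ)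
    (horth : ∀ i j : Fin n, ∑ v : V, φ i v * φ j v = if i = j then 1 else 0)
    (u : V → ℝ) : ∑ i : Fin n, (∑ v : V, u v * φ i v) ^ 2 = ∑ v : V, (u v) ^ 2 := by
  classical
  have h : ∀ i : Fin n, (∑ v : V, u v * φ i v) ^ 2
      = ∑ v : V, ∑ w : V, u v * u w * (φ i v * φ i w) := by
    intro i
    rw [sq, Finset.sum_mul_sum]
    exact Finset.sum_congr rfl fun v _ => Finset.sum_congr rfl fun w _ => by ring
  calc ∑ i : Fin n, (∑ v : V, u v * φ i v) ^ 2
      = ∑ i : Fin n, ∑ v : V, ∑ w : V, u v * u w * (φ i v * φ i w) := by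
        exact Finset.sum_congr rfl fun i _ => h i
    _ = ∑ v : V, ∑ w : V, u v * u w * (∑ i : Fin n, φ i v * φ i w) := by
        rw [Finset.sum_comm]
        refine Finset.sum_congr rfl fun v _ => ?_
        rw [Finset.sum_comm]
        refine Finset.sum_congr rfl fun w _ => ?_
        rw [Finset.mul_sum]
    _ = ∑ v : V, (u v) ^ 2 := by
        refine Finset.sum_congr rfl fun v _ => ?_
        rw [Finset.sum_eq_single v]
        · rw [ortho_complete n hn φ horth]; simp [sq]
        · intro w _ hw
          rw [ortho_complete n hn φ horth]
          simp [hw, (Ne.symm hw : v ≠ w)]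
        · simp

set_option maxHeartbeats 2000000 in
/-- Let `G` be a connected `d`-regular graph (`d ≥ 1`) on `n` vertices
with random-walk matrix `M = (1/d)·A`, and let `0 < λ ≤ 1`.  If the nonempty set `W`,
equipped with the equal weights `a_w = 1/|W|`, integrates `φ_i` exactly for every `i` with
`|μ_i| ≥ λ`, and `2·|W|·(d+1) < n`, then `λ² ≥ 1/(2(d+1))`. -/
theorem regular_graph_design_eigenvalue_obstruction
    {V : Type*} [Fintype V] [DecidableEq V]
    (G : SimpleGraph V) [DecidableRel G.Adj]
    (hconn : G.Connected)
    (n d : ℕ) (hn : Fintype.card V = n) (hn1 : 0 < n) (hd : 1 ≤ d)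
    (hreg : G.IsRegularOfDegree d)
    (M : Matrix V V ℝ)
    (hM : M = ((d : ℝ))⁻¹ • G.adjMatrix ℝ)
    (φ : Fin n → V → ℝ) (μ : Fin n → ℝ)
    (horth : ∀ i j : Fin n, ∑ v : V, φ i v * φ j v = if i = j then 1 else 0)
    (heig : ∀ i : Fin n, M.mulVec (φ i) = μ i • φ i)
    (hφ0 : ∀ v : V, φ ⟨0, hn1⟩ v = (Real.sqrt n)⁻¹)
    (hμ0 : μ ⟨0, hn1⟩ = 1)
    (lam : ℝ) (hlam : 0 < lam) (hlam1 : lam ≤ 1)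
    (W : Finset V) (hW : W.Nonempty)
    (hint : ∀ i : Fin n, lam ≤ |μ i| →
      ∑ w ∈ W, ((W.card : ℝ))⁻¹ * φ i w = (1 / (n : ℝ)) * ∑ v : V, φ i v)
    (hsize : 2 * W.card * (d + 1) < n) :
    lam ^ 2 ≥ 1 / (2 * ((d : ℝ) + 1)) := by
  classical
  set i0 : Fin n := ⟨0, hn1⟩ with hi0
  have hK0 : 0 < W.card := Finset.card_pos.mpr hW
  set K : ℝ := (W.card : ℝ) with hKdef
  have hKR : (0:ℝ) < K := by rw [hKdef]; exact_mod_cast hK0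
  have hnR : (0:ℝ) < n := by exact_mod_cast hn1
  have hdR : (1:ℝ) ≤ d := by exact_mod_cast hd
  have hdR0 : (0:ℝ) < d := lt_of_lt_of_le one_pos hdR
  have hsqn : (0:ℝ) < Real.sqrt n := Real.sqrt_pos.mpr hnR
  have hcardV : (Finset.univ : Finset V).card = n := by rw [Finset.card_univ, hn]
  -- sums of eigenvectors other than the constant one vanish
  have hS : ∀ i : Fin n, i ≠ i0 → ∑ v : V, φ i v = 0 := by
    intro i hi
    have h := horth i i0
    rw [if_neg hi] at h
    simp only [hφ0] at h
    rw [← Finset.sum_mul] at h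
    rcases mul_eq_zero.mp h with h' | h'
    · exact h'
    · exact absurd h' (inv_ne_zero (ne_of_gt hsqn))
  -- coefficients of large eigenvectors vanish
  have hc : ∀ i : Fin n, i ≠ i0 → lam ≤ |μ i| → ∑ w ∈ W, φ i w = 0 := by
    intro i hi hμi
    have h := hint i hμi
    rw [hS i hi, mul_zero, ← Finset.mul_sum] at h
    rcases mul_eq_zero.mp h with h' | h'
    · exact absurd h' (inv_ne_zero (ne_of_gt hKR))
    · exact h'
  -- the indicator and centered indicator
  set x : V → ℝ := fun v => if v ∈ W then 1 else 0 with hxdef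
  set y : V → ℝ := fun v => x v - K / n with hydef
  have hxsum : ∑ v : V, x v = K := by
    simp [hxdef, Finset.sum_ite_mem, hKdef]
  have hxφ : ∀ i : Fin n, ∑ v : V, x v * φ i v = ∑ w ∈ W, φ i w := by
    intro i
    simp [hxdef, ite_mul, Finset.sum_ite_mem]
  have hyφ : ∀ i : Fin n, ∑ v : V, y v * φ i v
      = if i = i0 then 0 else ∑ w ∈ W, φ i w := by
    intro i
    have expand : ∑ v : V, y v * φ i v
        = (∑ v : V, x v * φ i v) - (K / n) * ∑ v : V, φ i v := by
      rw [Finset.mul_sum, ← Finset.sum_sub_distrib]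
      exact Finset.sum_congr rfl fun v _ => by simp [hydef]; ring
    by_cases hi : i = i0
    · subst hi
      rw [if_pos rfl, expand, hxφ]
      simp only [hφ0]
      rw [Finset.sum_const, Finset.sum_const, hcardV]
      have : Real.sqrt n * Real.sqrt n = n := Real.mul_self_sqrt hnR.le
      rw [nsmul_eq_mul, nsmul_eq_mul, ← hKdef]
      field_simp
      nlinarith [this]
    · rw [if_neg hi, expand, hxφ, hS i hi, mul_zero, sub_zero]
  -- matrix facts
  have hMv : ∀ (f : V → ℝ) (v : V),
      M.mulVec f v = (d:ℝ)⁻¹ * ∑ u ∈ G.neighborFinset v, f u := by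
    intro f v
    rw [hM, Matrix.smul_mulVec]
    simp
  have hMsymEntry : ∀ v w : V, M v w = M w v := by
    intro v w
    rw [hM]
    simp [SimpleGraph.adjMatrix_apply, G.adj_comm]
  have hMsym : ∀ f g : V → ℝ,
      ∑ v : V, M.mulVec f v * g v = ∑ v : V, f v * M.mulVec g v := by
    intro f g
    simp only [Matrix.mulVec, dotProduct]
    calc ∑ v : V, (∑ w : V, M v w * f w) * g v
        = ∑ v : V, ∑ w : V, f w * (M w v * g v) := by
          refine Finset.sum_congr rfl fun v _ => ?_
          rw [Finset.sum_mul]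
          exact Finset.sum_congr rfl fun w _ => by rw [hMsymEntry v w]; ring
      _ = ∑ w : V, f w * (∑ v : V, M w v * g v) := by
          rw [Finset.sum_comm]
          exact Finset.sum_congr rfl fun w _ => by rw [Finset.mul_sum]
  -- column sums of M are 1
  have hcol : ∀ w : V, ∑ v : V, M v w = 1 := by
    intro w
    have : ∑ v : V, M v w = ∑ v : V, M w v := by
      exact Finset.sum_congr rfl fun v _ => hMsymEntry v w
    rw [this]
    have := hMv (fun _ => (1:ℝ)) w
    simp only [Matrix.mulVec, dotProduct, mul_one] at this
    rw [this, Finset.sum_const, nsmul_eq_mul, mul_one]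
    rw [show (G.neighborFinset w).card = G.degree w from rfl, hreg w]
    exact inv_mul_cancel₀ (ne_of_gt hdR0)
  have hdeg : ∀ w : V, #(G.neighborFinset w) = d := fun w => hreg w
  -- mx := M x
  set mx : V → ℝ := M.mulVec x with hmxdef
  have hmx_nonneg : ∀ v : V, 0 ≤ mx v := by
    intro v
    rw [hmxdef, hMv]
    apply mul_nonneg (inv_nonneg.mpr hdR0.le)
    apply Finset.sum_nonneg
    intro u _
    simp only [hxdef]
    split <;> norm_num
  have hmxsum : ∑ v : V, mx v = K := by
    simp only [hmxdef, Matrix.mulVec, dotProduct]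
    rw [Finset.sum_comm]
    calc ∑ w : V, ∑ v : V, M v w * x w
        = ∑ w : V, x w * ∑ v : V, M v w := by
          refine Finset.sum_congr rfl fun w _ => ?_
          rw [Finset.mul_sum]
          exact Finset.sum_congr rfl fun v _ => by ring
      _ = ∑ w : V, x w := Finset.sum_congr rfl fun w _ => by rw [hcol w, mul_one]
      _ = K := hxsum
  -- support of mx
  set T : Finset V := W.biUnion (fun w => G.neighborFinset w) with hTdef
  have hTcard : (T.card : ℝ) ≤ K * d := by
    have h1 : T.card ≤ ∑ w ∈ W, (G.neighborFinset w).card := Finset.card_biUnion_le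
    have h2 : ∑ w ∈ W, (G.neighborFinset w).card = W.card * d := by
      rw [Finset.sum_congr rfl fun w _ => hdeg w, Finset.sum_const, smul_eq_mul]
    have h3 := h1.trans_eq h2
    calc (T.card : ℝ) ≤ ((W.card * d : ℕ) : ℝ) := by exact_mod_cast h3
      _ = K * d := by rw [hKdef]; push_cast; ring
  have hmx_zero : ∀ v : V, v ∉ T → mx v = 0 := by
    intro v hv
    rw [hmxdef, hMv, mul_eq_zero]
    right
    apply Finset.sum_eq_zero
    intro u hu
    simp only [hxdef]
    rw [if_neg]
    intro huW
    exact hv (Finset.mem_biUnion.mpr ⟨u, huW,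
      by simpa [SimpleGraph.mem_neighborFinset, G.adj_comm] using hu⟩)
  have hmxT : ∑ v ∈ T, mx v = K := by
    rw [← hmxsum]
    exact Finset.sum_subset (Finset.subset_univ T) (fun v _ hv => hmx_zero v hv)
  -- Cauchy–Schwarz lower bound
  have hCS : K ^ 2 ≤ (K * d) * ∑ v : V, mx v ^ 2 := by
    have h1 : (∑ v ∈ T, mx v) ^ 2 ≤ (T.card : ℝ) * ∑ v ∈ T, mx v ^ 2 :=
      sq_sum_le_card_mul_sum_sq
    have h2 : ∑ v ∈ T, mx v ^ 2 ≤ ∑ v : V, mx v ^ 2 :=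
      Finset.sum_le_sum_of_subset_of_nonneg (Finset.subset_univ T)
        (fun v _ _ => sq_nonneg _)
    rw [hmxT] at h1
    have h4 : (0:ℝ) ≤ ∑ v ∈ T, mx v ^ 2 := Finset.sum_nonneg fun v _ => sq_nonneg _
    have h3 : (T.card : ℝ) * ∑ v ∈ T, mx v ^ 2 ≤ (K * d) * ∑ v : V, mx v ^ 2 :=
      mul_le_mul hTcard h2 h4 (by positivity)
    linarith
  have hmxsq : K / d ≤ ∑ v : V, mx v ^ 2 := by
    rw [div_le_iff₀ hdR0]
    nlinarith [hCS, hKR]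
  -- M y pointwise
  have hmy : ∀ v : V, M.mulVec y v = mx v - K / n := by
    intro v
    have hyx : y = x - (fun _ : V => K / n) := by funext u; simp [hydef]
    rw [hyx, Matrix.mulVec_sub]
    simp only [Pi.sub_apply, hmxdef]
    congr 1
    rw [hMv, Finset.sum_const, nsmul_eq_mul]
    rw [hdeg v, ← mul_assoc, inv_mul_cancel₀ (ne_of_gt hdR0), one_mul]
  -- norms
  have hx2 : ∑ v : V, x v ^ 2 = K := by
    have h : ∀ v : V, x v ^ 2 = x v := by
      intro v; simp only [hxdef]; split <;> norm_num
    rw [Finset.sum_congr rfl fun v _ => h v, hxsum]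
  have hysq : ∑ v : V, y v ^ 2 = K - K ^ 2 / n := by
    have h : ∀ v : V, y v ^ 2 = x v ^ 2 - 2 * (K / n) * x v + (K / n) ^ 2 := by
      intro v; simp only [hydef]; ring
    rw [Finset.sum_congr rfl fun v _ => h v, Finset.sum_add_distrib,
      Finset.sum_sub_distrib, hx2, ← Finset.mul_sum, hxsum, Finset.sum_const,
      hcardV, nsmul_eq_mul]
    field_simp
    ring
  have hmysq : ∑ v : V, M.mulVec y v ^ 2 = (∑ v : V, mx v ^ 2) - K ^ 2 / n := by
    have h : ∀ v : V, M.mulVec y v ^ 2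
        = mx v ^ 2 - 2 * (K / n) * mx v + (K / n) ^ 2 := by
      intro v; rw [hmy v]; ring
    rw [Finset.sum_congr rfl fun v _ => h v, Finset.sum_add_distrib,
      Finset.sum_sub_distrib, ← Finset.mul_sum, hmxsum, Finset.sum_const,
      hcardV, nsmul_eq_mul]
    field_simp
    ring
  -- spectral computation
  have hmyφ : ∀ i : Fin n, ∑ v : V, M.mulVec y v * φ i v
      = μ i * ∑ v : V, y v * φ i v := by
    intro i
    calc ∑ v : V, M.mulVec y v * φ i v
        = ∑ v : V, y v * M.mulVec (φ i) v := hMsym y (φ i)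
      _ = ∑ v : V, y v * (μ i * φ i v) := by rw [heig i]; rfl
      _ = μ i * ∑ v : V, y v * φ i v := by
          rw [Finset.mul_sum]
          exact Finset.sum_congr rfl fun v _ => by ring
  have hP1 : ∑ i : Fin n, (∑ v : V, M.mulVec y v * φ i v) ^ 2
      = ∑ v : V, M.mulVec y v ^ 2 := parseval_aux n hn φ horth _
  have hP2 : ∑ i : Fin n, (∑ v : V, y v * φ i v) ^ 2 = ∑ v : V, y v ^ 2 :=
    parseval_aux n hn φ horth y
  have hbound : ∑ v : V, M.mulVec y v ^ 2 ≤ lam ^ 2 * ∑ v : V, y v ^ 2 := by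
    rw [← hP1, ← hP2, Finset.mul_sum]
    apply Finset.sum_le_sum
    intro i _
    rw [hmyφ i]
    have hy_i := hyφ i
    by_cases hi : i = i0
    · rw [if_pos hi] at hy_i
      rw [hy_i]
      simp
    · rw [if_neg hi] at hy_i
      by_cases hμi : lam ≤ |μ i|
      · rw [hy_i, hc i hi hμi]
        simp
      · push_neg at hμi
        obtain ⟨ha, hb⟩ := abs_lt.mp hμi
        have h1 : μ i ^ 2 ≤ lam ^ 2 := sq_le_sq' (by linarith) (le_of_lt hb)
        rw [mul_pow]
        exact mul_le_mul_of_nonneg_right h1 (sq_nonneg _)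
  -- put it together
  have hmain : lam ^ 2 * (K - K ^ 2 / n) ≥ K / d - K ^ 2 / n := by
    rw [hysq, hmysq] at hbound
    linarith [hmxsq]
  have hstep : lam ^ 2 ≥ 1 / (d : ℝ) - K / n := by
    have h2 : (0:ℝ) ≤ lam ^ 2 * (K ^ 2 / n) := by positivity
    have h1 : K * (lam ^ 2 - (1 / (d : ℝ) - K / n)) ≥ 0 := by
      have hKd : K * (lam ^ 2 - (1 / (d : ℝ) - K / n))
          = (lam ^ 2 * (K - K ^ 2 / n) - (K / d - K ^ 2 / n)) + lam ^ 2 * (K ^ 2 / n) := by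
        field_simp
        ring
      rw [hKd]
      linarith [hmain, h2]
    have h3 : 0 ≤ lam ^ 2 - (1 / (d : ℝ) - K / n) := by
      by_contra hcon
      push_neg at hcon
      have := mul_neg_of_pos_of_neg hKR hcon
      linarith
    linarith
  have hsizeR : 2 * K * ((d : ℝ) + 1) < n := by
    have h : ((2 * W.card * (d + 1) : ℕ) : ℝ) < ((n : ℕ) : ℝ) := by
      exact_mod_cast hsize
    push_cast at h
    rw [hKdef]
    linarith
  have hKn : K / n < 1 / (2 * ((d : ℝ) + 1)) := by
    rw [div_lt_div_iff₀ hnR (by positivity)]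
    linarith
  have hd1 : 1 / ((d : ℝ) + 1) ≤ 1 / d :=
    one_div_le_one_div_of_le hdR0 (by linarith)
  have heq : 1 / ((d : ℝ) + 1) - 1 / (2 * ((d : ℝ) + 1)) = 1 / (2 * ((d : ℝ) + 1)) := by
    have : (d : ℝ) + 1 ≠ 0 := by positivity
    field_simp
    ring
  linarith
end
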